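/- arXiv:0803.3997 — 3 statements merged into one kernel-verified Lean document; each statement's English description precedes it below -/
import Mathlib

section
/- Let d be a positive integer and M, r positive real numbers. Then there exists ε > 0 such that for every polynomial A = a₀ z^d + a₁ z^{d−1} + ⋯ + a_d with coefficients a_i holomorphic on the closed ball B_n(r) ⊂ C^n satisfying sup_{x∈B_n(r)} |a_i(x)| < M, and for all holomorphic functions α, c on B_n(r) with sup |α| < M and sup |c| < ε such that A(x, α(x)) = c(x)·(∂A/∂z)(x, α(x))² for all x ∈ B_n(r), there exists a holomorphic function b on B_n(r) with A(x, b(x)) = 0 for all x ∈ B_n(r) and sup_{x∈B_n(r)} |b(x) − α(x)| ≤ 2 sup_{x∈B_n(r)} |c(x)·(∂A/∂z)(x, α(x))|. -/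
open Filter Topology Metric Finset NNReal

noncomputable section Stmt2Aux

variable (d : ℕ)

/-- The polynomial `A` evaluated at `z = A`. -/
def Pe (a : Fin (d+1) → ℂ) (A : ℂ) : ℂ := ∑ i : Fin (d+1), a i * A ^ (d - (i:ℕ))

/-- The derivative `∂A/∂z` evaluated at `z = A`. -/
def Pd (a : Fin (d+1) → ℂ) (A : ℂ) : ℂ :=
  ∑ i : Fin (d+1), ((d - (i:ℕ) : ℕ) : ℂ) * a i * A ^ (d - (i:ℕ) - 1)

/-- Taylor coefficients of the polynomial at `A`. -/
def Tk (a : Fin (d+1) → ℂ) (A : ℂ) (k : ℕ) : ℂ :=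
  ∑ i : Fin (d+1), a i * (((d - (i:ℕ)).choose k : ℕ) : ℂ) * A ^ (d - (i:ℕ) - k)

def Rr (a : Fin (d+1) → ℂ) (A C u : ℂ) : ℂ :=
  ∑ j ∈ Finset.range (d-1), Tk d a A (j+2) * (C * Pd d a A)^j * u^(j+2)

def Rd (a : Fin (d+1) → ℂ) (A C u : ℂ) : ℂ :=
  ∑ j ∈ Finset.range (d-1), Tk d a A (j+2) * (C * Pd d a A)^j * ((((j+2) : ℕ) : ℂ) * u^(j+1))

def gg (a : Fin (d+1) → ℂ) (A C u : ℂ) : ℂ := 1 + u + C * Rr d a A C u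

lemma Tk_zero (a : Fin (d+1) → ℂ) (A : ℂ) : Tk d a A 0 = Pe d a A := by
  simp [Tk, Pe]

lemma Tk_one (a : Fin (d+1) → ℂ) (A : ℂ) : Tk d a A 1 = Pd d a A := by
  unfold Tk Pd
  refine Finset.sum_congr rfl fun i _ => ?_
  rw [Nat.choose_one_right]; ring

lemma taylor (a : Fin (d+1) → ℂ) (A t : ℂ) :
    Pe d a (A + t) = ∑ k ∈ Finset.range (d+1), Tk d a A k * t ^ k := by
  unfold Pe Tk
  have h : ∀ m : ℕ, m ≤ d → (A + t) ^ m
      = ∑ k ∈ Finset.range (d+1), ((m.choose k : ℕ) : ℂ) * A ^ (m - k) * t ^ k := by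
    intro m hm
    rw [add_comm, add_pow]
    rw [Finset.sum_subset (Finset.range_subset_range.2 (Nat.succ_le_succ hm))]
    · exact Finset.sum_congr rfl fun k hk => by ring
    · intro k hk hk2
      simp only [Finset.mem_range, not_lt] at hk2
      rw [Nat.choose_eq_zero_of_lt (by omega)]
      simp
  calc ∑ i : Fin (d+1), a i * (A + t) ^ (d - (i:ℕ))
      = ∑ i : Fin (d+1), ∑ k ∈ Finset.range (d+1),
          a i * ((((d - (i:ℕ)).choose k : ℕ) : ℂ) * A ^ (d - (i:ℕ) - k) * t ^ k) := by
        refine Finset.sum_congr rfl fun i _ => ?_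
        rw [h (d - (i:ℕ)) (by omega), Finset.mul_sum]
    _ = ∑ k ∈ Finset.range (d+1), (∑ i : Fin (d+1),
          a i * (((d - (i:ℕ)).choose k : ℕ) : ℂ) * A ^ (d - (i:ℕ) - k)) * t ^ k := by
        rw [Finset.sum_comm]
        refine Finset.sum_congr rfl fun k _ => ?_
        rw [Finset.sum_mul]
        exact Finset.sum_congr rfl fun i _ => by ring

lemma key (hd : 0 < d) (a : Fin (d+1) → ℂ) (A C u : ℂ)
    (h : Pe d a A = C * (Pd d a A)^2) :
    Pe d a (A + C * Pd d a A * u) = C * (Pd d a A)^2 * gg d a A C u := by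
  obtain ⟨m, hm⟩ : ∃ m, d = m + 1 := ⟨d-1, by omega⟩
  rw [taylor]
  have hsplit : ∀ f : ℕ → ℂ, ∑ k ∈ Finset.range (d+1), f k
      = (∑ k ∈ Finset.range (d-1), f (k+2)) + f 1 + f 0 := by
    intro f
    subst hm
    rw [Finset.sum_range_succ', Finset.sum_range_succ']
    simp only [Nat.add_sub_cancel]
  rw [hsplit]
  rw [Tk_one, Tk_zero, h]
  unfold gg Rr
  have hterm : ∑ k ∈ Finset.range (d-1), Tk d a A (k+2) * (C * Pd d a A * u) ^ (k+2)
      = C * Pd d a A ^ 2 * (C * ∑ k ∈ Finset.range (d-1),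
          Tk d a A (k+2) * (C * Pd d a A) ^ k * u ^ (k+2)) := by
    rw [Finset.mul_sum, Finset.mul_sum]
    exact Finset.sum_congr rfl fun k _ => by ring
  rw [hterm]
  ring

lemma powA_le {M : ℝ} {A : ℂ} (hA : ‖A‖ ≤ M) {m : ℕ} (hm : m ≤ d) :
    ‖A‖ ^ m ≤ (max M 1) ^ d := by
  calc ‖A‖ ^ m ≤ (max M 1) ^ m :=
        pow_le_pow_left₀ (norm_nonneg A) (hA.trans (le_max_left _ _)) m
    _ ≤ (max M 1) ^ d := pow_le_pow_right₀ (le_max_right _ _) hm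

lemma norm_Pd_le {M : ℝ} {a : Fin (d+1) → ℂ} {A : ℂ}
    (ha : ∀ i, ‖a i‖ ≤ M) (hA : ‖A‖ ≤ M) (hM : 0 ≤ M) :
    ‖Pd d a A‖ ≤ (d+1) * ((d:ℝ) * (M * (max M 1) ^ d)) := by
  refine (norm_sum_le _ _).trans ?_
  have key : ∀ i : Fin (d+1), ‖((d - (i:ℕ) : ℕ) : ℂ) * a i * A ^ (d - (i:ℕ) - 1)‖
      ≤ (d:ℝ) * (M * (max M 1) ^ d) := by
    intro i
    rw [norm_mul, norm_mul, norm_pow, Complex.norm_natCast]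
    have h1 : ((d - (i:ℕ) : ℕ) : ℝ) ≤ (d : ℝ) := by exact_mod_cast Nat.sub_le _ _
    have h2 : ‖A‖ ^ (d - (i:ℕ) - 1) ≤ (max M 1) ^ d := powA_le d hA (by omega)
    calc ((d - (i:ℕ) : ℕ) : ℝ) * ‖a i‖ * ‖A‖ ^ (d - (i:ℕ) - 1)
        ≤ ((d:ℝ) * M) * (max M 1) ^ d :=
          mul_le_mul (mul_le_mul h1 (ha i) (norm_nonneg _) (Nat.cast_nonneg _)) h2
            (by positivity) (by positivity)
      _ = (d:ℝ) * (M * (max M 1) ^ d) := by ring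
  refine (Finset.sum_le_sum fun i _ => key i).trans ?_
  rw [Finset.sum_const, Finset.card_univ, Fintype.card_fin, nsmul_eq_mul]
  push_cast; norm_num

lemma norm_Tk_le (hd : 0 < d) {M : ℝ} {a : Fin (d+1) → ℂ} {A : ℂ}
    (ha : ∀ i, ‖a i‖ ≤ M) (hA : ‖A‖ ≤ M) (hM : 0 ≤ M) {k : ℕ} (hk : k ≤ d) :
    ‖Tk d a A k‖ ≤ (d+1) * ((d:ℝ)^d * (M * (max M 1) ^ d)) := by
  refine (norm_sum_le _ _).trans ?_
  have key : ∀ i : Fin (d+1), ‖a i * (((d - (i:ℕ)).choose k : ℕ) : ℂ) * A ^ (d - (i:ℕ) - k)‖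
      ≤ (d:ℝ)^d * (M * (max M 1) ^ d) := by
    intro i
    rw [norm_mul, norm_mul, norm_pow, Complex.norm_natCast]
    have h1 : (((d - (i:ℕ)).choose k : ℕ) : ℝ) ≤ (d:ℝ)^d := by
      have : (d - (i:ℕ)).choose k ≤ d ^ d :=
        ((d - (i:ℕ)).choose_le_pow k).trans
          ((Nat.pow_le_pow_left (Nat.sub_le _ _) k).trans (Nat.pow_le_pow_right hd hk))
      exact_mod_cast this
    have h2 : ‖A‖ ^ (d - (i:ℕ) - k) ≤ (max M 1) ^ d := powA_le d hA (by omega)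
    calc ‖a i‖ * (((d - (i:ℕ)).choose k : ℕ) : ℝ) * ‖A‖ ^ (d - (i:ℕ) - k)
        ≤ (M * (d:ℝ)^d) * (max M 1) ^ d :=
          mul_le_mul (mul_le_mul (ha i) h1 (Nat.cast_nonneg _) hM) h2 (by positivity)
            (by positivity)
      _ = (d:ℝ)^d * (M * (max M 1) ^ d) := by ring
  refine (Finset.sum_le_sum fun i _ => key i).trans ?_
  rw [Finset.sum_const, Finset.card_univ, Fintype.card_fin, nsmul_eq_mul]
  push_cast; norm_num

lemma pow_lip {u v : ℂ} (hu : ‖u‖ ≤ 2) (hv : ‖v‖ ≤ 2) :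
    ∀ m : ℕ, ‖u^(m+1) - v^(m+1)‖ ≤ (m+1) * 2^m * ‖u - v‖ := by
  intro m
  induction m with
  | zero => simp
  | succ m ih =>
    have h : u^(m+2) - v^(m+2) = u^(m+1) * (u - v) + (u^(m+1) - v^(m+1)) * v := by ring
    rw [h]
    refine (norm_add_le _ _).trans ?_
    have h1 : ‖u^(m+1) * (u - v)‖ ≤ 2^(m+1) * ‖u - v‖ := by
      rw [norm_mul, norm_pow]
      exact mul_le_mul_of_nonneg_right (pow_le_pow_left₀ (norm_nonneg _) hu _) (norm_nonneg _)
    have h2 : ‖(u^(m+1) - v^(m+1)) * v‖ ≤ ((m+1) * 2^m * ‖u - v‖) * 2 := by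
      rw [norm_mul]
      exact mul_le_mul ih hv (norm_nonneg _) (by positivity)
    refine (add_le_add h1 h2).trans (le_of_eq ?_)
    push_cast
    ring

lemma norm_Rr_le {B1 : ℝ} (hB1 : 0 ≤ B1) {a : Fin (d+1) → ℂ} {A C u : ℂ}
    (hT : ∀ k, 2 ≤ k → k ≤ d → ‖Tk d a A k‖ ≤ B1)
    (hCP : ‖C * Pd d a A‖ ≤ 1) (hu : ‖u‖ ≤ 2) :
    ‖Rr d a A C u‖ ≤ ((d-1 : ℕ) : ℝ) * (B1 * 2^d) := by
  refine (norm_sum_le _ _).trans ?_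
  have key : ∀ j ∈ Finset.range (d-1),
      ‖Tk d a A (j+2) * (C * Pd d a A)^j * u^(j+2)‖ ≤ B1 * 2^d := by
    intro j hj
    rw [Finset.mem_range] at hj
    rw [norm_mul, norm_mul, norm_pow, norm_pow]
    have h1 : ‖Tk d a A (j+2)‖ ≤ B1 := hT _ (by omega) (by omega)
    have h2 : ‖C * Pd d a A‖^j ≤ 1 := pow_le_one₀ (norm_nonneg _) hCP
    have h3 : ‖u‖^(j+2) ≤ (2:ℝ)^d :=
      (pow_le_pow_left₀ (norm_nonneg _) hu _).trans (pow_le_pow_right₀ one_le_two (by omega))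
    calc ‖Tk d a A (j+2)‖ * ‖C * Pd d a A‖^j * ‖u‖^(j+2)
        ≤ (B1 * 1) * 2^d := by
          exact mul_le_mul (mul_le_mul h1 h2 (by positivity) hB1) h3 (by positivity)
            (by positivity)
      _ = B1 * 2^d := by ring
  refine (Finset.sum_le_sum key).trans ?_
  rw [Finset.sum_const, Finset.card_range, nsmul_eq_mul]

lemma lip_Rr {B1 : ℝ} (hB1 : 0 ≤ B1) {a : Fin (d+1) → ℂ} {A C : ℂ}
    (hT : ∀ k, 2 ≤ k → k ≤ d → ‖Tk d a A k‖ ≤ B1)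
    (hCP : ‖C * Pd d a A‖ ≤ 1) {u v : ℂ} (hu : ‖u‖ ≤ 2) (hv : ‖v‖ ≤ 2) :
    ‖Rr d a A C u - Rr d a A C v‖ ≤ (((d-1 : ℕ) : ℝ) * (B1 * ((d:ℝ) * 2^d))) * ‖u - v‖ := by
  unfold Rr
  rw [← Finset.sum_sub_distrib]
  refine (norm_sum_le _ _).trans ?_
  have key : ∀ j ∈ Finset.range (d-1),
      ‖Tk d a A (j+2) * (C * Pd d a A)^j * u^(j+2) - Tk d a A (j+2) * (C * Pd d a A)^j * v^(j+2)‖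
        ≤ (B1 * ((d:ℝ) * 2^d)) * ‖u - v‖ := by
    intro j hj
    rw [Finset.mem_range] at hj
    rw [← mul_sub, norm_mul, norm_mul]
    have h1 : ‖Tk d a A (j+2)‖ ≤ B1 := hT _ (by omega) (by omega)
    have h2 : ‖(C * Pd d a A)^j‖ ≤ 1 := by
      rw [norm_pow]; exact pow_le_one₀ (norm_nonneg _) hCP
    have h3 : ‖u^(j+2) - v^(j+2)‖ ≤ (d:ℝ) * 2^d * ‖u - v‖ := by
      refine (pow_lip hu hv (j+1)).trans ?_
      refine mul_le_mul_of_nonneg_right ?_ (norm_nonneg _)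
      have e1 : ((j:ℝ)+1+1) ≤ (d:ℝ) := by
        have : (j+2 : ℕ) ≤ d := by omega
        exact_mod_cast this
      have e2 : (2:ℝ)^(j+1) ≤ 2^d := pow_le_pow_right₀ one_le_two (by omega)
      push_cast
      exact mul_le_mul e1 e2 (by positivity) (Nat.cast_nonneg d)
    calc ‖Tk d a A (j+2)‖ * ‖(C * Pd d a A)^j‖ * ‖u^(j+2) - v^(j+2)‖
        ≤ (B1 * 1) * ((d:ℝ) * 2^d * ‖u - v‖) :=
          mul_le_mul (mul_le_mul h1 h2 (norm_nonneg _) hB1) h3 (norm_nonneg _) (by positivity)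
      _ = (B1 * ((d:ℝ) * 2^d)) * ‖u - v‖ := by ring
  refine (Finset.sum_le_sum key).trans ?_
  rw [Finset.sum_const, Finset.card_range, nsmul_eq_mul]
  exact le_of_eq (by ring)

lemma norm_Rd_le {B1 : ℝ} (hB1 : 0 ≤ B1) {a : Fin (d+1) → ℂ} {A C u : ℂ}
    (hT : ∀ k, 2 ≤ k → k ≤ d → ‖Tk d a A k‖ ≤ B1)
    (hCP : ‖C * Pd d a A‖ ≤ 1) (hu : ‖u‖ ≤ 2) :
    ‖Rd d a A C u‖ ≤ ((d-1 : ℕ) : ℝ) * (B1 * ((d:ℝ) * 2^d)) := by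
  refine (norm_sum_le _ _).trans ?_
  have key : ∀ j ∈ Finset.range (d-1),
      ‖Tk d a A (j+2) * (C * Pd d a A)^j * ((((j+2) : ℕ) : ℂ) * u^(j+1))‖
        ≤ B1 * ((d:ℝ) * 2^d) := by
    intro j hj
    rw [Finset.mem_range] at hj
    rw [norm_mul, norm_mul, norm_mul, norm_pow, norm_pow, Complex.norm_natCast]
    have h1 : ‖Tk d a A (j+2)‖ ≤ B1 := hT _ (by omega) (by omega)
    have h2 : ‖C * Pd d a A‖^j ≤ 1 := pow_le_one₀ (norm_nonneg _) hCP
    have e1 : (((j+2) : ℕ) : ℝ) ≤ (d:ℝ) := by exact_mod_cast (by omega : (j+2:ℕ) ≤ d)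
    have e2 : ‖u‖^(j+1) ≤ (2:ℝ)^d :=
      (pow_le_pow_left₀ (norm_nonneg _) hu _).trans (pow_le_pow_right₀ one_le_two (by omega))
    calc ‖Tk d a A (j+2)‖ * ‖C * Pd d a A‖^j * ((((j+2) : ℕ) : ℝ) * ‖u‖^(j+1))
        ≤ (B1 * 1) * ((d:ℝ) * 2^d) := by
          refine mul_le_mul (mul_le_mul h1 h2 (by positivity) hB1) ?_ (by positivity)
            (by positivity)
          exact mul_le_mul e1 e2 (by positivity) (Nat.cast_nonneg _)
      _ = B1 * ((d:ℝ) * 2^d) := by ring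
  refine (Finset.sum_le_sum key).trans ?_
  rw [Finset.sum_const, Finset.card_range, nsmul_eq_mul]

lemma hasDerivAt_gg (a : Fin (d+1) → ℂ) (A C u₀ : ℂ) :
    HasDerivAt (fun u => gg d a A C u) (1 + C * Rd d a A C u₀) u₀ := by
  have h1 : HasDerivAt (fun u : ℂ => Rr d a A C u) (Rd d a A C u₀) u₀ := by
    unfold Rr Rd
    apply HasDerivAt.fun_sum
    intro j _
    have := (hasDerivAt_pow (j+2) u₀).const_mul (Tk d a A (j+2) * (C * Pd d a A)^j)
    simpa using this
  have h2 : HasDerivAt (fun u : ℂ => 1 + u + C * Rr d a A C u) (1 + C * Rd d a A C u₀) u₀ := by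
    have ha : HasDerivAt (fun u : ℂ => 1 + u) 1 u₀ := (hasDerivAt_id u₀).const_add 1
    have hb := h1.const_mul C
    simpa using ha.fun_add hb
  exact h2

lemma exists_u {B1 B2 B3 : ℝ} (hB1 : 0 ≤ B1) {a : Fin (d+1) → ℂ} {A C : ℂ}
    (hT : ∀ k, 2 ≤ k → k ≤ d → ‖Tk d a A k‖ ≤ B1)
    (hCP : ‖C * Pd d a A‖ ≤ 1)
    (hB2 : ((d-1 : ℕ) : ℝ) * (B1 * 2^d) ≤ B2)
    (hB3 : ((d-1 : ℕ) : ℝ) * (B1 * ((d:ℝ) * 2^d)) ≤ B3)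
    (hC2 : ‖C‖ * B2 ≤ 1/2) (hC3 : ‖C‖ * B3 ≤ 1/2) :
    ∃ u : ℂ, ‖u + 1‖ ≤ 1/2 ∧ gg d a A C u = 0 := by
  set f : ℂ → ℂ := fun u => -1 - C * Rr d a A C u with hf
  have hnorm2 : ∀ u : ℂ, u ∈ closedBall (-1 : ℂ) 1 → ‖u‖ ≤ 2 := by
    intro u hu
    rw [mem_closedBall, dist_eq_norm, sub_neg_eq_add] at hu
    calc ‖u‖ = ‖u + 1 + (-1)‖ := by ring_nf
      _ ≤ ‖u + 1‖ + ‖(-1 : ℂ)‖ := norm_add_le _ _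
      _ ≤ 1 + 1 := by simpa using hu
      _ = 2 := by norm_num
  have hmapsval : ∀ u : ℂ, ‖u‖ ≤ 2 → ‖f u + 1‖ ≤ 1/2 := by
    intro u hu
    have : f u + 1 = -(C * Rr d a A C u) := by rw [hf]; ring
    rw [this, norm_neg, norm_mul]
    calc ‖C‖ * ‖Rr d a A C u‖ ≤ ‖C‖ * B2 := by
          refine mul_le_mul_of_nonneg_left ?_ (norm_nonneg _)
          exact (norm_Rr_le d hB1 hT hCP hu).trans hB2
      _ ≤ 1/2 := hC2
  have hsf : Set.MapsTo f (closedBall (-1 : ℂ) 1) (closedBall (-1 : ℂ) 1) := by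
    intro u hu
    rw [mem_closedBall, dist_eq_norm, sub_neg_eq_add]
    exact (hmapsval u (hnorm2 u hu)).trans (by norm_num)
  have hlip : LipschitzOnWith (1/2 : ℝ≥0) f (closedBall (-1 : ℂ) 1) := by
    apply LipschitzOnWith.of_dist_le_mul
    intro u hu v hv
    rw [dist_eq_norm, dist_eq_norm]
    have : f u - f v = -(C * (Rr d a A C u - Rr d a A C v)) := by rw [hf]; ring
    rw [this, norm_neg, norm_mul]
    calc ‖C‖ * ‖Rr d a A C u - Rr d a A C v‖
        ≤ ‖C‖ * ((((d-1 : ℕ) : ℝ) * (B1 * ((d:ℝ) * 2^d))) * ‖u - v‖) :=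
          mul_le_mul_of_nonneg_left (lip_Rr d hB1 hT hCP (hnorm2 u hu) (hnorm2 v hv))
            (norm_nonneg _)
      _ ≤ (1/2) * ‖u - v‖ := by
          have h0 : (0:ℝ) ≤ ‖u - v‖ := norm_nonneg _
          have : ‖C‖ * (((d-1 : ℕ) : ℝ) * (B1 * ((d:ℝ) * 2^d))) ≤ 1/2 :=
            (mul_le_mul_of_nonneg_left hB3 (norm_nonneg _)).trans hC3
          nlinarith [mul_nonneg (norm_nonneg C) (norm_nonneg (u - v))]
      _ = (1/2 : ℝ≥0) * ‖u - v‖ := by norm_num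
  have hcontr : ContractingWith (1/2 : ℝ≥0) (Set.MapsTo.restrict f _ _ hsf) :=
    ⟨one_half_lt_one, hlip.mapsToRestrict hsf⟩
  obtain ⟨y, hymem, hyfix, -, -⟩ :=
    hcontr.exists_fixedPoint' isClosed_closedBall.isComplete hsf
      (mem_closedBall_self (by norm_num)) (edist_ne_top _ _)
  refine ⟨y, ?_, ?_⟩
  · have : y + 1 = -(C * Rr d a A C y) := by
      have := hyfix
      unfold Function.IsFixedPt at this
      rw [hf] at this
      linear_combination -this
    rw [this, norm_neg]
    have := hmapsval y (hnorm2 y hymem)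
    have hy1 : f y + 1 = -(C * Rr d a A C y) := by rw [hf]; ring
    rw [hy1, norm_neg] at this
    exact this
  · have hy : f y = y := hyfix
    rw [hf] at hy
    unfold gg
    linear_combination -hy

lemma unique_u {B1 B3 : ℝ} (hB1 : 0 ≤ B1) {a : Fin (d+1) → ℂ} {A C : ℂ}
    (hT : ∀ k, 2 ≤ k → k ≤ d → ‖Tk d a A k‖ ≤ B1)
    (hCP : ‖C * Pd d a A‖ ≤ 1)
    (hB3 : ((d-1 : ℕ) : ℝ) * (B1 * ((d:ℝ) * 2^d)) ≤ B3)
    (hC3 : ‖C‖ * B3 ≤ 1/2) {u v : ℂ}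
    (hu : ‖u + 1‖ ≤ 1) (hv : ‖v + 1‖ ≤ 1)
    (hgu : gg d a A C u = 0) (hgv : gg d a A C v = 0) : u = v := by
  have hu2 : ‖u‖ ≤ 2 := by
    calc ‖u‖ = ‖u + 1 + (-1)‖ := by ring_nf
      _ ≤ ‖u + 1‖ + ‖(-1:ℂ)‖ := norm_add_le _ _
      _ ≤ 1 + 1 := by simpa using hu
      _ = 2 := by norm_num
  have hv2 : ‖v‖ ≤ 2 := by
    calc ‖v‖ = ‖v + 1 + (-1)‖ := by ring_nf
      _ ≤ ‖v + 1‖ + ‖(-1:ℂ)‖ := norm_add_le _ _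
      _ ≤ 1 + 1 := by simpa using hv
      _ = 2 := by norm_num
  have hdiff : u - v = -(C * (Rr d a A C u - Rr d a A C v)) := by
    unfold gg at hgu hgv
    linear_combination hgu - hgv
  have hle : ‖u - v‖ ≤ (1/2) * ‖u - v‖ := by
    calc ‖u - v‖ = ‖C‖ * ‖Rr d a A C u - Rr d a A C v‖ := by rw [hdiff, norm_neg, norm_mul]
      _ ≤ ‖C‖ * ((((d-1 : ℕ) : ℝ) * (B1 * ((d:ℝ) * 2^d))) * ‖u - v‖) :=
          mul_le_mul_of_nonneg_left (lip_Rr d hB1 hT hCP hu2 hv2) (norm_nonneg _)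
      _ ≤ (1/2) * ‖u - v‖ := by
          have : ‖C‖ * (((d-1 : ℕ) : ℝ) * (B1 * ((d:ℝ) * 2^d))) ≤ 1/2 :=
            (mul_le_mul_of_nonneg_left hB3 (norm_nonneg _)).trans hC3
          nlinarith [norm_nonneg (u - v), mul_nonneg (norm_nonneg C) (norm_nonneg (u-v))]
  have : ‖u - v‖ ≤ 0 := by linarith
  have := le_antisymm this (norm_nonneg _)
  rwa [norm_eq_zero, sub_eq_zero] at this

abbrev Wd := (Fin (d+1) → ℂ) × ℂ × ℂ

lemma contDiff_G : ContDiff ℂ 2 (fun p : Wd d × ℂ => gg d p.1.1 p.1.2.1 p.1.2.2 p.2) := by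
  have hai : ∀ i, ContDiff ℂ 2 (fun p : Wd d × ℂ => p.1.1 i) := fun i =>
    (contDiff_pi.mp (contDiff_fst.comp contDiff_fst)) i
  have hA : ContDiff ℂ 2 (fun p : Wd d × ℂ => p.1.2.1) :=
    contDiff_fst.comp (contDiff_snd.comp contDiff_fst)
  have hC : ContDiff ℂ 2 (fun p : Wd d × ℂ => p.1.2.2) :=
    contDiff_snd.comp (contDiff_snd.comp contDiff_fst)
  have hu : ContDiff ℂ 2 (fun p : Wd d × ℂ => p.2) := contDiff_snd
  have hPd : ContDiff ℂ 2 (fun p : Wd d × ℂ => Pd d p.1.1 p.1.2.1) :=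
    ContDiff.sum fun i _ => (contDiff_const.mul (hai i)).mul (hA.pow _)
  have hTk : ∀ k, ContDiff ℂ 2 (fun p : Wd d × ℂ => Tk d p.1.1 p.1.2.1 k) := fun k =>
    ContDiff.sum fun i _ => ((hai i).mul contDiff_const).mul (hA.pow _)
  have hRr : ContDiff ℂ 2 (fun p : Wd d × ℂ => Rr d p.1.1 p.1.2.1 p.1.2.2 p.2) :=
    ContDiff.sum fun j _ => ((hTk (j+2)).mul ((hC.mul hPd).pow j)).mul (hu.pow (j+2))
  exact (contDiff_const.add hu).add (hC.mul hRr)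

lemma implicit (w₀ : Wd d) (u₀ : ℂ)
    (h0 : gg d w₀.1 w₀.2.1 w₀.2.2 u₀ = 0) (hu₀ : ‖u₀ + 1‖ ≤ 1/2)
    (hder : (1 : ℂ) + w₀.2.2 * Rd d w₀.1 w₀.2.1 w₀.2.2 u₀ ≠ 0) :
    ∃ φ : Wd d → ℂ, DifferentiableAt ℂ φ w₀ ∧ φ w₀ = u₀ ∧
      ∀ᶠ w in 𝓝 w₀, gg d w.1 w.2.1 w.2.2 (φ w) = 0 ∧ ‖φ w + 1‖ ≤ 1 := by
  classical
  set G : Wd d × ℂ → ℂ := fun p => gg d p.1.1 p.1.2.1 p.1.2.2 p.2 with hGdef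
  have hG : ContDiff ℂ 2 G := contDiff_G d
  have hstrict : HasStrictFDerivAt G (fderiv ℂ G (w₀, u₀)) (w₀, u₀) :=
    hG.contDiffAt.hasStrictFDerivAt (by norm_num)
  set D := fderiv ℂ G (w₀, u₀) with hDdef
  have hD1 : D (0, 1) = 1 + w₀.2.2 * Rd d w₀.1 w₀.2.1 w₀.2.2 u₀ := by
    have hι : HasFDerivAt (fun u : ℂ => ((w₀ : Wd d), u))
        ((0 : ℂ →L[ℂ] Wd d).prod (ContinuousLinearMap.id ℂ ℂ)) u₀ :=
      (hasFDerivAt_const w₀ u₀).prodMk (hasFDerivAt_id u₀)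
    have hcomp := (hstrict.hasFDerivAt.comp u₀ hι).hasDerivAt
    have hexp : HasDerivAt (fun u : ℂ => G (w₀, u))
        (1 + w₀.2.2 * Rd d w₀.1 w₀.2.1 w₀.2.2 u₀) u₀ := hasDerivAt_gg d w₀.1 w₀.2.1 w₀.2.2 u₀
    have := hcomp.unique hexp
    rw [← this]
    simp
  have hDadd : ∀ p : Wd d × ℂ, D p = D (p.1, 0) + p.2 • D (0, 1) := by
    intro p
    have hp : p = ((p.1, 0) : Wd d × ℂ) + p.2 • ((0 : Wd d), (1 : ℂ)) := by
      simp [Prod.ext_iff]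
    calc D p = D (((p.1, 0) : Wd d × ℂ) + p.2 • ((0 : Wd d), (1 : ℂ))) := by rw [← hp]
      _ = D (p.1, 0) + p.2 • D (0, 1) := by rw [map_add, map_smul]
  have hpartial : D (0, 1) ≠ 0 := by rw [hD1]; exact hder
  set fwd : (Wd d × ℂ) →L[ℂ] (Wd d × ℂ) := (ContinuousLinearMap.fst ℂ (Wd d) ℂ).prod D with hfwd
  set bwd : (Wd d × ℂ) →L[ℂ] (Wd d × ℂ) := (ContinuousLinearMap.fst ℂ (Wd d) ℂ).prod
      ((D (0,1))⁻¹ • (ContinuousLinearMap.snd ℂ (Wd d) ℂ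
        - D.comp ((ContinuousLinearMap.inl ℂ (Wd d) ℂ).comp
            (ContinuousLinearMap.fst ℂ (Wd d) ℂ)))) with hbwd
  have happf : ∀ p : Wd d × ℂ, fwd p = (p.1, D p) := fun p => rfl
  have happb : ∀ q : Wd d × ℂ, bwd q = (q.1, (D (0,1))⁻¹ • (q.2 - D (q.1, 0))) := fun q => rfl
  have hleft : Function.LeftInverse bwd fwd := by
    intro p
    rw [happf, happb]
    refine Prod.ext rfl ?_
    simp only
    rw [hDadd p, add_sub_cancel_left, smul_eq_mul, smul_eq_mul]
    field_simp
  have hright : Function.RightInverse bwd fwd := by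
    intro q
    rw [happb, happf]
    refine Prod.ext rfl ?_
    simp only
    rw [hDadd (q.1, (D (0,1))⁻¹ • (q.2 - D (q.1, 0)))]
    simp only [smul_eq_mul]
    field_simp
    ring
  set e : (Wd d × ℂ) ≃L[ℂ] (Wd d × ℂ) := ContinuousLinearEquiv.equivOfInverse fwd bwd hleft hright
    with he
  set Ψ : Wd d × ℂ → Wd d × ℂ := fun p => (p.1, G p) with hΨdef
  have hΨ : HasStrictFDerivAt Ψ (e : (Wd d × ℂ) →L[ℂ] (Wd d × ℂ)) (w₀, u₀) :=
    ((ContinuousLinearMap.fst ℂ (Wd d) ℂ).hasStrictFDerivAt).prodMk hstrict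
  set ψ := hΨ.localInverse Ψ e (w₀, u₀) with hψdef
  have hΨpt : Ψ (w₀, u₀) = (w₀, 0) := by
    simp only [hΨdef]
    exact Prod.ext rfl h0
  have hψpt : ψ (w₀, 0) = (w₀, u₀) := by
    rw [← hΨpt]
    exact hΨ.localInverse_apply_image
  have hψdiff : HasStrictFDerivAt ψ (e.symm : (Wd d × ℂ) →L[ℂ] (Wd d × ℂ)) (w₀, 0) := by
    rw [← hΨpt]
    exact hΨ.to_localInverse
  refine ⟨fun w => (ψ (w, 0)).2, ?_, ?_, ?_⟩
  · have hg : DifferentiableAt ℂ (fun w : Wd d => ((w, (0:ℂ)) : Wd d × ℂ)) w₀ :=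
      differentiableAt_id.prodMk (differentiableAt_const _)
    have h1 : DifferentiableAt ℂ (ψ ∘ fun w : Wd d => ((w, (0:ℂ)) : Wd d × ℂ)) w₀ :=
      DifferentiableAt.comp w₀ hψdiff.differentiableAt hg
    have h2 : DifferentiableAt ℂ (Prod.snd ∘ (ψ ∘ fun w : Wd d => ((w, (0:ℂ)) : Wd d × ℂ))) w₀ :=
      DifferentiableAt.comp w₀ differentiable_snd.differentiableAt h1
    exact h2
  · show (ψ (w₀, 0)).2 = u₀
    rw [hψpt]
  · have hev1 : ∀ᶠ p in 𝓝 ((w₀, 0) : Wd d × ℂ), Ψ (ψ p) = p := by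
      rw [← hΨpt]; exact hΨ.eventually_right_inverse
    have hcontψ : ContinuousAt ψ ((w₀, 0) : Wd d × ℂ) := by
      rw [← hΨpt]; exact hΨ.localInverse_continuousAt
    have hopen : IsOpen {u : ℂ | ‖u + 1‖ < 1} :=
      isOpen_lt ((continuous_id.add continuous_const).norm) continuous_const
    have hmem : (ψ ((w₀, 0) : Wd d × ℂ)).2 ∈ {u : ℂ | ‖u + 1‖ < 1} := by
      rw [hψpt]
      simp only [Set.mem_setOf_eq]
      calc ‖u₀ + 1‖ ≤ 1/2 := hu₀
        _ < 1 := by norm_num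
    have hev2 : ∀ᶠ p in 𝓝 ((w₀, 0) : Wd d × ℂ), (ψ p).2 ∈ {u : ℂ | ‖u + 1‖ < 1} :=
      ContinuousAt.eventually_mem (continuous_snd.continuousAt.comp hcontψ)
        (hopen.mem_nhds hmem)
    have htend : Tendsto (fun w : Wd d => ((w, 0) : Wd d × ℂ)) (𝓝 w₀) (𝓝 (w₀, 0)) :=
      ((continuous_id.prodMk continuous_const).tendsto w₀)
    filter_upwards [htend.eventually hev1, htend.eventually hev2] with w hw hw2
    have h1 : (ψ (w, 0)).1 = w := congrArg Prod.fst hw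
    have h2 : G (ψ (w, 0)) = 0 := congrArg Prod.snd hw
    simp only [hGdef] at h2
    rw [h1] at h2
    exact ⟨h2, hw2.le⟩

lemma one_add_ne {z : ℂ} (h : ‖z‖ < 1) : (1 : ℂ) + z ≠ 0 := by
  intro h0
  have hz : z = -1 := by linear_combination h0
  rw [hz] at h
  simp at h

end Stmt2Aux

theorem stmt_2 (n d : ℕ) (hd : 0 < d) (M r : ℝ) (hM : 0 < M) (hr : 0 < r) :
    ∃ ε > (0:ℝ), ∀ a : Fin (d + 1) → (Fin n → ℂ) → ℂ,
      (∀ i, DifferentiableOn ℂ (a i) (closedBall (0 : Fin n → ℂ) r)) →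
      (∀ i, ∀ x ∈ closedBall (0 : Fin n → ℂ) r, ‖a i x‖ < M) →
      ∀ α c : (Fin n → ℂ) → ℂ,
        DifferentiableOn ℂ α (closedBall (0 : Fin n → ℂ) r) →
        DifferentiableOn ℂ c (closedBall (0 : Fin n → ℂ) r) →
        (∀ x ∈ closedBall (0 : Fin n → ℂ) r, ‖α x‖ < M) →
        (∀ x ∈ closedBall (0 : Fin n → ℂ) r, ‖c x‖ < ε) →
        -- A ∘ α = c · (∂A/∂z ∘ α)²
        (∀ x ∈ closedBall (0 : Fin n → ℂ) r,
          (∑ i : Fin (d + 1), a i x * (α x) ^ (d - (i : ℕ))) =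
            c x * (∑ i : Fin (d + 1), ((d - (i : ℕ) : ℕ) : ℂ) * a i x * (α x) ^ (d - (i : ℕ) - 1)) ^ 2) →
        ∃ b : (Fin n → ℂ) → ℂ,
          DifferentiableOn ℂ b (closedBall (0 : Fin n → ℂ) r) ∧
          (∀ x ∈ closedBall (0 : Fin n → ℂ) r,
            (∑ i : Fin (d + 1), a i x * (b x) ^ (d - (i : ℕ))) = 0) ∧
          ∀ x ∈ closedBall (0 : Fin n → ℂ) r,
            ‖b x - α x‖ ≤ 2 * ⨆ y ∈ closedBall (0 : Fin n → ℂ) r,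
              ‖c y * (∑ i : Fin (d + 1), ((d - (i : ℕ) : ℕ) : ℂ) * a i y * (α y) ^ (d - (i : ℕ) - 1))‖ := by
  classical
  set B := closedBall (0 : Fin n → ℂ) r with hB
  set B0 : ℝ := M * (max M 1) ^ d with hB0
  set KP : ℝ := (d+1) * ((d:ℝ) * B0) + 1 with hKP
  set B1 : ℝ := (d+1) * ((d:ℝ)^d * B0) with hB1def
  set B2 : ℝ := ((d-1 : ℕ) : ℝ) * (B1 * 2^d) + 1 with hB2def
  set B3 : ℝ := ((d-1 : ℕ) : ℝ) * (B1 * ((d:ℝ) * 2^d)) + 1 with hB3def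
  have hB0pos : 0 < B0 := by
    have : (0:ℝ) < (max M 1) ^ d := by positivity
    exact mul_pos hM this
  have hB1nonneg : 0 ≤ B1 := by positivity
  have hKPpos : 0 < KP := by positivity
  have hB2pos : 0 < B2 := by positivity
  have hB3pos : 0 < B3 := by positivity
  refine ⟨min (1/KP) (min (1/(2*B2)) (1/(2*B3))), by positivity, ?_⟩
  set ε : ℝ := min (1/KP) (min (1/(2*B2)) (1/(2*B3))) with hε
  intro a haD haM α c hαD hcD hαM hcε heq
  -- pointwise bounds
  have hbnd : ∀ x ∈ B, (∀ i, ‖a i x‖ ≤ M) ∧ ‖α x‖ ≤ M ∧ ‖c x‖ ≤ ε := fun x hx =>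
    ⟨fun i => (haM i x hx).le, (hαM x hx).le, (hcε x hx).le⟩
  have hT : ∀ x ∈ B, ∀ k, 2 ≤ k → k ≤ d →
      ‖Tk d (fun i => a i x) (α x) k‖ ≤ B1 := by
    intro x hx k _ hk
    exact norm_Tk_le d hd (hbnd x hx).1 (hbnd x hx).2.1 hM.le hk
  have hPdle : ∀ x ∈ B, ‖Pd d (fun i => a i x) (α x)‖ ≤ KP := by
    intro x hx
    refine (norm_Pd_le d (hbnd x hx).1 (hbnd x hx).2.1 hM.le).trans ?_
    rw [hKP, hB0]; linarith
  have hCP : ∀ x ∈ B, ‖c x * Pd d (fun i => a i x) (α x)‖ ≤ 1 := by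
    intro x hx
    rw [norm_mul]
    have h1 : ‖c x‖ ≤ 1/KP := (hbnd x hx).2.2.trans (min_le_left _ _)
    calc ‖c x‖ * ‖Pd d (fun i => a i x) (α x)‖ ≤ (1/KP) * KP :=
          mul_le_mul h1 (hPdle x hx) (norm_nonneg _) (by positivity)
      _ = 1 := by field_simp
  have hC2 : ∀ x ∈ B, ‖c x‖ * B2 ≤ 1/2 := by
    intro x hx
    have h1 : ‖c x‖ ≤ 1/(2*B2) := (hbnd x hx).2.2.trans ((min_le_right _ _).trans (min_le_left _ _))
    calc ‖c x‖ * B2 ≤ (1/(2*B2)) * B2 := mul_le_mul_of_nonneg_right h1 hB2pos.le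
      _ = 1/2 := by field_simp
  have hC3 : ∀ x ∈ B, ‖c x‖ * B3 ≤ 1/2 := by
    intro x hx
    have h1 : ‖c x‖ ≤ 1/(2*B3) :=
      (hbnd x hx).2.2.trans ((min_le_right _ _).trans (min_le_right _ _))
    calc ‖c x‖ * B3 ≤ (1/(2*B3)) * B3 := mul_le_mul_of_nonneg_right h1 hB3pos.le
      _ = 1/2 := by field_simp
  have hB2' : ((d-1 : ℕ) : ℝ) * (B1 * 2^d) ≤ B2 := by rw [hB2def]; linarith
  have hB3' : ((d-1 : ℕ) : ℝ) * (B1 * ((d:ℝ) * 2^d)) ≤ B3 := by rw [hB3def]; linarith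
  -- pointwise solution of the auxiliary equation
  have hex : ∀ x, x ∈ B → ∃ u : ℂ, ‖u + 1‖ ≤ 1/2 ∧
      gg d (fun i => a i x) (α x) (c x) u = 0 := by
    intro x hx
    exact exists_u d hB1nonneg (hT x hx) (hCP x hx) hB2' hB3' (hC2 x hx) (hC3 x hx)
  choose uu huu1 huu2 using hex
  set U : (Fin n → ℂ) → ℂ := fun x => if hx : x ∈ B then uu x hx else 0 with hU
  have hU1 : ∀ x (hx : x ∈ B), ‖U x + 1‖ ≤ 1/2 := by
    intro x hx; rw [hU]; simp only [dif_pos hx]; exact huu1 x hx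
  have hU2 : ∀ x (hx : x ∈ B), gg d (fun i => a i x) (α x) (c x) (U x) = 0 := by
    intro x hx; rw [hU]; simp only [dif_pos hx]; exact huu2 x hx
  have hUnorm : ∀ x (hx : x ∈ B), ‖U x‖ ≤ 2 := by
    intro x hx
    calc ‖U x‖ = ‖U x + 1 + (-1)‖ := by ring_nf
      _ ≤ ‖U x + 1‖ + ‖(-1:ℂ)‖ := norm_add_le _ _
      _ ≤ 1/2 + 1 := by
          have := hU1 x hx
          simp only [norm_neg, norm_one]
          linarith
      _ ≤ 2 := by norm_num
  -- uniqueness of such solutions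
  have huniq : ∀ x ∈ B, ∀ u v : ℂ, ‖u + 1‖ ≤ 1 → ‖v + 1‖ ≤ 1 →
      gg d (fun i => a i x) (α x) (c x) u = 0 →
      gg d (fun i => a i x) (α x) (c x) v = 0 → u = v := by
    intro x hx u v h1 h2 h3 h4
    exact unique_u d hB1nonneg (hT x hx) (hCP x hx) hB3' (hC3 x hx) h1 h2 h3 h4
  -- the holomorphic solution
  set b : (Fin n → ℂ) → ℂ :=
    fun x => α x + c x * Pd d (fun i => a i x) (α x) * U x with hb
  -- differentiability of U
  have hUdiff : DifferentiableOn ℂ U B := by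
    intro x₀ hx₀
    set w₀ : Wd d := (fun i => a i x₀, (α x₀, c x₀)) with hw₀
    have h0 : gg d w₀.1 w₀.2.1 w₀.2.2 (U x₀) = 0 := hU2 x₀ hx₀
    have hder : (1 : ℂ) + w₀.2.2 * Rd d w₀.1 w₀.2.1 w₀.2.2 (U x₀) ≠ 0 := by
      apply one_add_ne
      rw [norm_mul]
      calc ‖c x₀‖ * ‖Rd d (fun i => a i x₀) (α x₀) (c x₀) (U x₀)‖
          ≤ ‖c x₀‖ * (((d-1 : ℕ) : ℝ) * (B1 * ((d:ℝ) * 2^d))) :=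
            mul_le_mul_of_nonneg_left
              (norm_Rd_le d hB1nonneg (hT x₀ hx₀) (hCP x₀ hx₀) (hUnorm x₀ hx₀))
              (norm_nonneg _)
        _ ≤ ‖c x₀‖ * B3 := mul_le_mul_of_nonneg_left hB3' (norm_nonneg _)
        _ ≤ 1/2 := hC3 x₀ hx₀
        _ < 1 := by norm_num
    obtain ⟨φ, hφdiff, hφeq, hφev⟩ := implicit d w₀ (U x₀) h0 (hU1 x₀ hx₀) hder
    set Y : (Fin n → ℂ) → Wd d := fun x => (fun i => a i x, (α x, c x)) with hY
    have hYdiff : DifferentiableWithinAt ℂ Y B x₀ := by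
      refine DifferentiableWithinAt.prodMk ?_ ?_
      · exact differentiableWithinAt_pi.mpr fun i => haD i x₀ hx₀
      · exact (hαD x₀ hx₀).prodMk (hcD x₀ hx₀)
    have hYcont : Tendsto Y (𝓝[B] x₀) (𝓝 w₀) := hYdiff.continuousWithinAt
    have hev' : ∀ᶠ x in 𝓝[B] x₀,
        gg d (Y x).1 (Y x).2.1 (Y x).2.2 (φ (Y x)) = 0 ∧ ‖φ (Y x) + 1‖ ≤ 1 :=
      hYcont.eventually hφev
    have heqev : ∀ᶠ x in 𝓝[B] x₀, U x = φ (Y x) := by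
      filter_upwards [hev', self_mem_nhdsWithin] with x h12 hxB
      refine huniq x hxB _ _ ?_ ?_ (hU2 x hxB) h12.1
      · have := hU1 x hxB; linarith
      · exact h12.2
    have hcomp : DifferentiableWithinAt ℂ (fun x => φ (Y x)) B x₀ :=
      DifferentiableAt.comp_differentiableWithinAt x₀ hφdiff hYdiff
    refine hcomp.congr_of_eventuallyEq heqev ?_
    have : x₀ ∈ {x | U x = φ (Y x)} := by
      have : φ (Y x₀) = U x₀ := hφeq
      simp [this.symm]
    exact this
  have hPdD : DifferentiableOn ℂ (fun x => Pd d (fun i => a i x) (α x)) B := by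
    apply DifferentiableOn.fun_sum
    intro i _
    exact ((differentiableOn_const _).mul (haD i)).mul (hαD.pow _)
  have hbD : DifferentiableOn ℂ b B :=
    hαD.add ((hcD.mul hPdD).mul hUdiff)
  refine ⟨b, hbD, ?_, ?_⟩
  · -- the equation A(b) = 0
    intro x hx
    have hPeq : Pe d (fun i => a i x) (α x) = c x * (Pd d (fun i => a i x) (α x))^2 := heq x hx
    have hkey := key d hd (fun i => a i x) (α x) (c x) (U x) hPeq
    have : Pe d (fun i => a i x) (b x) = 0 := by
      rw [hb]
      simp only
      rw [hkey, hU2 x hx, mul_zero]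
    exact this
  · -- the bound
    intro x hx
    set F : (Fin n → ℂ) → ℝ :=
      fun y => ‖c y * Pd d (fun i => a i y) (α y)‖ with hF
    have hFle : ∀ y ∈ B, F y ≤ 1 := hCP
    have hFnonneg : ∀ y, 0 ≤ F y := fun y => norm_nonneg _
    have hbdd : BddAbove (Set.range fun y => ⨆ (_ : y ∈ B), F y) := by
      refine ⟨1, ?_⟩
      rintro t ⟨y, rfl⟩
      show (⨆ (_ : y ∈ B), F y) ≤ 1
      by_cases hy : y ∈ B
      · rw [ciSup_pos hy]; exact hFle y hy
      · have : IsEmpty (y ∈ B) := ⟨hy⟩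
        rw [Real.iSup_of_isEmpty]
        norm_num
    have hFle2 : F x ≤ ⨆ y, ⨆ (_ : y ∈ B), F y := by
      calc F x = ⨆ (_ : x ∈ B), F x := (ciSup_pos (f := fun _ : x ∈ B => F x) hx).symm
        _ ≤ ⨆ y, ⨆ (_ : y ∈ B), F y := le_ciSup hbdd x
    have hval : ‖b x - α x‖ ≤ 2 * F x := by
      have : b x - α x = c x * Pd d (fun i => a i x) (α x) * U x := by rw [hb]; ring
      rw [this, norm_mul]
      calc F x * ‖U x‖ ≤ F x * 2 :=
            mul_le_mul_of_nonneg_left (hUnorm x hx) (hFnonneg x)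
        _ = 2 * F x := by ring
    exact hval.trans (mul_le_mul_of_nonneg_left hFle2 (by norm_num))
end

section
/- Let U ⊆ C^n and U' ⊆ C be domains and let E ⊆ U × U' be a purely n-dimensional analytic set with proper projection π̃ onto U, described by a unitary polynomial p ∈ O(U)[z] (the optimal polynomial for E) with discriminant Δ_p ≢ 0. Then the image under π̃ of the set S(E) of singular points of the projection π̃|_E equals {x ∈ U : Δ_p(x) = 0}. -/
open Filter Topology

/-- `X` is an analytic subset of `Ω`: near every point of `Ω` it is the common zero set
of finitely many holomorphic functions. -/
def IsAnalyticIn {E : Type} [NormedAddCommGroup E] [NormedSpace ℂ E] (Ω X : Set E) : Prop :=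
  X ⊆ Ω ∧ ∀ z ∈ Ω, ∃ U : Set E, IsOpen U ∧ z ∈ U ∧ ∃ (N : ℕ) (g : Fin N → E → ℂ),
    (∀ i, DifferentiableOn ℂ (g i) U) ∧ X ∩ U = {x ∈ U | ∀ i, g i x = 0}

/-- `x` is a regular point of `X` of (complex) dimension `d`: near `x`, after a
`ℂ`-linear change of coordinates, `X` is the graph of a holomorphic map defined on an
open subset of `ℂ^d`. -/
def IsRegPtOfDim {E : Type} [NormedAddCommGroup E] [NormedSpace ℂ E]
    (d : ℕ) (X : Set E) (x : E) : Prop :=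
  ∃ U : Set E, IsOpen U ∧ x ∈ U ∧
    ∃ (e : ℕ) (L : E ≃L[ℂ] ((Fin d → ℂ) × (Fin e → ℂ)))
      (Ω : Set (Fin d → ℂ)) (g : (Fin d → ℂ) → (Fin e → ℂ)),
      IsOpen Ω ∧ DifferentiableOn ℂ g Ω ∧
      L '' (X ∩ U) = {p : (Fin d → ℂ) × (Fin e → ℂ) | p.1 ∈ Ω ∧ p.2 = g p.1}

/-- `X` has pure dimension `d`: regular points (necessarily of dimension `d`) are dense in `X`. -/
def PureDim {E : Type} [NormedAddCommGroup E] [NormedSpace ℂ E] (X : Set E) (d : ℕ) : Prop :=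
  (∀ x ∈ X, x ∈ closure {y | y ∈ X ∧ IsRegPtOfDim d X y}) ∧
  (∀ e : ℕ, ∀ x ∈ X, IsRegPtOfDim e X x → e = d)

/-- `d` is the dimension of `X`: the maximum of the dimensions at regular points. -/
def SetDimIs {E : Type} [NormedAddCommGroup E] [NormedSpace ℂ E] (X : Set E) (d : ℕ) : Prop :=
  (∃ x ∈ X, IsRegPtOfDim d X x) ∧ ∀ e : ℕ, ∀ x ∈ X, IsRegPtOfDim e X x → e ≤ d

/-- The natural projection restricted to `Y` is proper over `U`. -/
def ProperProjOn {A B : Type} [TopologicalSpace A] [TopologicalSpace B]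
    (U : Set A) (Y : Set (A × B)) : Prop :=
  ∀ K ⊆ U, IsCompact K → IsCompact {p | p ∈ Y ∧ p.1 ∈ K}

/-- The projection `π|_Y` is regular (an analytic isomorphism) at `p`:
near `p`, `Y` is the graph of a holomorphic map. -/
def ProjRegularAt {A B : Type} [NormedAddCommGroup A] [NormedSpace ℂ A]
    [NormedAddCommGroup B] [NormedSpace ℂ B] (Y : Set (A × B)) (p : A × B) : Prop :=
  ∃ W : Set A, IsOpen W ∧ p.1 ∈ W ∧ ∃ g : A → B, DifferentiableOn ℂ g W ∧
    ∃ V : Set (A × B), IsOpen V ∧ p ∈ V ∧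
      Y ∩ V = {q : A × B | q.1 ∈ W ∧ q.2 = g q.1} ∩ V

/-- The set `S(Y, π)` of singular points of the projection `π|_Y`. -/
def SingProj {A B : Type} [NormedAddCommGroup A] [NormedSpace ℂ A]
    [NormedAddCommGroup B] [NormedSpace ℂ B] (Y : Set (A × B)) : Set (A × B) :=
  {p | p ∈ Y ∧ ¬ ProjRegularAt Y p}

/-- `X` is irreducible as an analytic subset of `Ω`. -/
def IrredAnalyticIn {E : Type} [NormedAddCommGroup E] [NormedSpace ℂ E] (Ω X : Set E) : Prop :=
  IsAnalyticIn Ω X ∧ X.Nonempty ∧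
    ∀ X₁ X₂ : Set E, IsAnalyticIn Ω X₁ → IsAnalyticIn Ω X₂ → X = X₁ ∪ X₂ → X = X₁ ∨ X = X₂

/-- `C` is an irreducible analytic component of `X` (inside `Ω`). -/
def IsIrredComp {E : Type} [NormedAddCommGroup E] [NormedSpace ℂ E] (Ω X C : Set E) : Prop :=
  IrredAnalyticIn Ω C ∧ C ⊆ X ∧
    ∀ C' : Set E, IrredAnalyticIn Ω C' → C ⊆ C' → C' ⊆ X → C' = C

/-- `Z` has generic fiber cardinality `s` over `E`: outside a proper analytic subset of `E`
every fiber of the projection has exactly `s` points. -/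
def GenFiberCard {A B : Type} [NormedAddCommGroup A] [NormedSpace ℂ A]
    (E : Set A) (Z : Set (A × B)) (s : ℕ) : Prop :=
  ∃ T : Set A, IsAnalyticIn E T ∧ T ≠ E ∧ ∀ x ∈ E \ T, Set.ncard {v : B | (x, v) ∈ Z} = s

/-- An algebraic subset of `ℂ^N`. -/
def IsAlgSet (N : ℕ) (V : Set (Fin N → ℂ)) : Prop :=
  ∃ (q : ℕ) (ps : Fin q → MvPolynomial (Fin N) ℂ),
    V = {y | ∀ i, MvPolynomial.eval y (ps i) = 0}

/-- A Nash function on an open set `U ⊆ ℂ^N`. -/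
def NashFn (N : ℕ) (U : Set (Fin N → ℂ)) (f : (Fin N → ℂ) → ℂ) : Prop :=
  DifferentiableOn ℂ f U ∧ ∀ x₀ ∈ U, ∃ V : Set (Fin N → ℂ), IsOpen V ∧ x₀ ∈ V ∧
    ∃ P : Polynomial (MvPolynomial (Fin N) ℂ), P ≠ 0 ∧
      ∀ x ∈ V ∩ U, Polynomial.eval₂ (MvPolynomial.eval x) (f x) P = 0

/-- `X` is a Nash subset of `Ω ⊆ ℂ^N`. -/
def IsNashIn (N : ℕ) (Ω X : Set (Fin N → ℂ)) : Prop :=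
  X ⊆ Ω ∧ ∀ z ∈ Ω, ∃ U : Set (Fin N → ℂ), IsOpen U ∧ z ∈ U ∧
    ∃ (q : ℕ) (g : Fin q → (Fin N → ℂ) → ℂ),
      (∀ i, NashFn N U (g i)) ∧ X ∩ U = {x ∈ U | ∀ i, g i x = 0}


section StmtSevenHelpers

open Polynomial Filter Topology Metric

/-- The "divided difference" polynomial `S_m(w) = ∑_{j<m} w^{m-1-j} X^j`. -/
noncomputable def Spol (m : ℕ) (w : ℂ) : Polynomial ℂ :=
  ∑ j ∈ Finset.range m, Polynomial.C (w ^ (m - 1 - j)) * Polynomial.X ^ j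

lemma Spol_eval (m : ℕ) (w z : ℂ) :
    (Spol m w).eval z = ∑ j ∈ Finset.range m, z ^ j * w ^ (m - 1 - j) := by
  simp [Spol, eval_finset_sum, mul_comm]

lemma Spol_eval_mul (m : ℕ) (w z : ℂ) :
    (Spol m w).eval z * (z - w) = z ^ m - w ^ m := by
  rw [Spol_eval]; exact geom_sum₂_mul z w m

lemma Spol_eval_self (m : ℕ) (w : ℂ) :
    (Spol m w).eval w = (m : ℂ) * w ^ (m - 1) := by
  rw [Spol_eval]
  have : ∀ j ∈ Finset.range m, w ^ j * w ^ (m - 1 - j) = w ^ (m - 1) := by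
    intro j hj
    rw [← pow_add]
    congr 1
    have := Finset.mem_range.1 hj
    omega
  rw [Finset.sum_congr rfl this, Finset.sum_const, Finset.card_range, nsmul_eq_mul]

lemma Spol_coeff (m : ℕ) (w : ℂ) (k : ℕ) :
    (Spol m w).coeff k = if k < m then w ^ (m - 1 - k) else 0 := by
  rw [Spol, finset_sum_coeff]
  simp only [coeff_C_mul, coeff_X_pow, mul_ite, mul_one, mul_zero]
  rw [Finset.sum_ite_eq (Finset.range m) k (fun j => w ^ (m - 1 - j))]
  simp [Finset.mem_range]

lemma Spol_natDegree_le (m : ℕ) (w : ℂ) : (Spol m w).natDegree ≤ m - 1 := by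
  apply natDegree_le_iff_coeff_eq_zero.2
  intro k hk
  rw [Spol_coeff]
  have : ¬ k < m := by omega
  simp [this]

lemma Spol_monic (m : ℕ) (hm : 1 ≤ m) (w : ℂ) :
    (Spol m w).Monic ∧ (Spol m w).natDegree = m - 1 := by
  have hc : (Spol m w).coeff (m - 1) = 1 := by
    rw [Spol_coeff]
    have : m - 1 < m := by omega
    simp [this]
  have hge : m - 1 ≤ (Spol m w).natDegree :=
    le_natDegree_of_ne_zero (by rw [hc]; exact one_ne_zero)
  have hdeg : (Spol m w).natDegree = m - 1 := le_antisymm (Spol_natDegree_le m w) hge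
  refine ⟨?_, hdeg⟩
  unfold Monic leadingCoeff
  rw [hdeg, hc]

/-- For a monic polynomial of positive degree over `ℂ`, near any point `z` there is a
root within distance `‖q.eval z‖ ^ (1/deg)`. -/
lemma exists_root_near (q : Polynomial ℂ) (hm : q.Monic) (hd : 1 ≤ q.natDegree) (z : ℂ) :
    ∃ ζ : ℂ, q.IsRoot ζ ∧ ‖z - ζ‖ ^ q.natDegree ≤ ‖q.eval z‖ := by
  classical
  have hq0 : q ≠ 0 := hm.ne_zero
  have hsplit : Splits q := IsAlgClosed.splits q
  have hcard : Multiset.card q.roots = q.natDegree := (splits_iff_card_roots).1 hsplit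
  have hfac : q = (q.roots.map fun a => X - C a).prod :=
    hsplit.eq_prod_roots_of_monic hm
  have heval : ‖q.eval z‖₊ = ((q.roots.map fun a => ‖z - a‖₊)).prod := by
    conv_lhs => rw [hfac]
    rw [eval_multiset_prod, Multiset.map_map]
    rw [show ((Multiset.map (eval z ∘ fun a => X - C a) q.roots)).prod
        = ((Multiset.map (fun a => z - a) q.roots)).prod by
      congr 1; apply Multiset.map_congr rfl; intro a _; simp [Function.comp]]
    rw [show (Multiset.map (fun a : ℂ => ‖z - a‖₊) q.roots)
        = Multiset.map (fun x : ℂ => ‖x‖₊) (Multiset.map (fun a : ℂ => z - a) q.roots) by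
      rw [Multiset.map_map]; rfl]
    exact map_multiset_prod (nnnormHom : ℂ →*₀ NNReal) _
  have hne : q.roots.toFinset.Nonempty := by
    rw [Multiset.toFinset_nonempty]
    intro h
    rw [h] at hcard
    simp at hcard
    omega
  obtain ⟨ζ, hζmem, hζmin⟩ := q.roots.toFinset.exists_min_image (fun a => ‖z - a‖₊) hne
  have hζroot : q.IsRoot ζ := by
    have := Multiset.mem_toFinset.1 hζmem
    exact (mem_roots hq0).1 this
  refine ⟨ζ, hζroot, ?_⟩
  have hkey : ‖z - ζ‖₊ ^ q.natDegree ≤ (q.roots.map fun a => ‖z - a‖₊).prod := by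
    rw [← hcard, show Multiset.card q.roots = Multiset.card (q.roots.map fun a => ‖z - a‖₊) by
      rw [Multiset.card_map]]
    apply Multiset.pow_card_le_prod
    intro x hx
    obtain ⟨a, ha, rfl⟩ := Multiset.mem_map.1 hx
    exact hζmin a (Multiset.mem_toFinset.2 ha)
  rw [← heval] at hkey
  have := (NNReal.coe_le_coe).2 hkey
  push_cast at this
  simpa using this

lemma monic_add_aux {P Q : Polynomial ℂ} (hP : P.Monic) (h : Q.natDegree < P.natDegree) :
    (P + Q).Monic ∧ (P + Q).natDegree = P.natDegree := by
  have hdeg : Q.degree < P.degree := by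
    calc Q.degree ≤ (Q.natDegree : WithBot ℕ) := degree_le_natDegree
    _ < (P.natDegree : WithBot ℕ) := by exact_mod_cast h
    _ = P.degree := (degree_eq_natDegree hP.ne_zero).symm
  exact ⟨hP.add_of_left hdeg, natDegree_add_eq_left_of_degree_lt hdeg⟩

/-- Differentiability of an implicit function, given mere (non-strict) differentiability
of the defining equation, continuity of the solution, and a nonvanishing partial
derivative in the fiber direction. -/
lemma implicit_diff {A : Type*} [NormedAddCommGroup A] [NormedSpace ℂ A]
    {F : A × ℂ → ℂ} {f' : A × ℂ →L[ℂ] ℂ} {g : A → ℂ} {x₁ : A}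
    (hF : HasFDerivAt F f' (x₁, g x₁)) (hc : f' (0, 1) ≠ 0)
    (hg : ContinuousAt g x₁) (hsol : ∀ᶠ x' in 𝓝 x₁, F (x', g x') = 0) :
    DifferentiableAt ℂ g x₁ := by
  classical
  set c := f' (0, 1) with hcdef
  set v₀ : A × ℂ := (x₁, g x₁) with hv₀
  -- decomposition of f'
  have hf'dec : ∀ h : A, ∀ k : ℂ, f' (h, k) = f' (h, 0) + k * c := by
    intro h k
    have : (h, k) = (h, (0:ℂ)) + k • ((0:A), (1:ℂ)) := by
      simp [Prod.ext_iff]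
    rw [this, map_add, map_smul]
    simp [hcdef, smul_eq_mul]
  have hτ : Filter.Tendsto (fun x' => (x', g x')) (𝓝 x₁) (𝓝 v₀) :=
    (continuousAt_id.prodMk hg)
  have hF0 : F v₀ = 0 := hsol.self_of_nhds
  have hlo := hF.isLittleO
  -- the error term pulled back along x' ↦ (x', g x')
  have herr : ∀ ε > (0:ℝ), ∀ᶠ x' in 𝓝 x₁,
      ‖f' (x' - x₁, g x' - g x₁)‖ ≤ ε * max ‖x' - x₁‖ ‖g x' - g x₁‖ := by
    intro ε hε
    have h1 := (Asymptotics.isLittleO_iff.1 hlo) hε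
    have h2 := hτ.eventually h1
    filter_upwards [h2, hsol] with x' hx' hx'0
    have : F (x', g x') - F v₀ - f' ((x', g x') - v₀) = - f' (x' - x₁, g x' - g x₁) := by
      rw [hx'0, hF0]
      simp [hv₀, Prod.sub_def]
    rw [this, norm_neg] at hx'
    calc ‖f' (x' - x₁, g x' - g x₁)‖ ≤ ε * ‖(x', g x') - v₀‖ := hx'
    _ = ε * max ‖x' - x₁‖ ‖g x' - g x₁‖ := by
        rw [hv₀, Prod.sub_def]; simp [Prod.norm_def]
  have hcpos : (0:ℝ) < ‖c‖ := norm_pos_iff.2 hc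
  set K : ℝ := max 1 (2 * ‖f'‖ / ‖c‖) with hK
  have hK1 : (1:ℝ) ≤ K := le_max_left _ _
  have hKpos : (0:ℝ) < K := lt_of_lt_of_le one_pos hK1
  -- eventual Lipschitz bound
  have hlip : ∀ᶠ x' in 𝓝 x₁, ‖g x' - g x₁‖ ≤ K * ‖x' - x₁‖ := by
    filter_upwards [herr (‖c‖/2) (by positivity)] with x' hx'
    set Δx := x' - x₁
    set Δg := g x' - g x₁
    have hb : ‖Δg‖ * ‖c‖ ≤ ‖f'‖ * ‖Δx‖ + ‖c‖/2 * max ‖Δx‖ ‖Δg‖ := by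
      have h1 : ‖Δg * c‖ ≤ ‖f' (Δx, 0)‖ + ‖f' (Δx, Δg)‖ := by
        have : Δg * c = f' (Δx, Δg) - f' (Δx, 0) := by rw [hf'dec Δx Δg]; ring
        rw [this]
        rw [add_comm]
        exact norm_sub_le _ _
      have h2 : ‖f' (Δx, (0:ℂ))‖ ≤ ‖f'‖ * ‖Δx‖ := by
        calc ‖f' (Δx, (0:ℂ))‖ ≤ ‖f'‖ * ‖(Δx, (0:ℂ))‖ := f'.le_opNorm _
        _ = ‖f'‖ * ‖Δx‖ := by simp [Prod.norm_def]
      calc ‖Δg‖ * ‖c‖ = ‖Δg * c‖ := by rw [norm_mul]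
      _ ≤ ‖f' (Δx, 0)‖ + ‖f' (Δx, Δg)‖ := h1
      _ ≤ ‖f'‖ * ‖Δx‖ + ‖c‖/2 * max ‖Δx‖ ‖Δg‖ := by
          exact add_le_add h2 hx'
    rcases le_or_gt ‖Δg‖ ‖Δx‖ with h | h
    · calc ‖Δg‖ ≤ ‖Δx‖ := h
      _ = 1 * ‖Δx‖ := (one_mul _).symm
      _ ≤ K * ‖Δx‖ := by
          apply mul_le_mul_of_nonneg_right hK1 (norm_nonneg _)
    · have hmax : max ‖Δx‖ ‖Δg‖ = ‖Δg‖ := max_eq_right h.le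
      rw [hmax] at hb
      have : ‖Δg‖ * (‖c‖/2) ≤ ‖f'‖ * ‖Δx‖ := by nlinarith
      have h3 : ‖Δg‖ ≤ 2 * ‖f'‖ / ‖c‖ * ‖Δx‖ := by
        rw [div_mul_eq_mul_div, le_div_iff₀ hcpos]
        nlinarith
      calc ‖Δg‖ ≤ 2 * ‖f'‖ / ‖c‖ * ‖Δx‖ := h3
      _ ≤ K * ‖Δx‖ := mul_le_mul_of_nonneg_right (le_max_right _ _) (norm_nonneg _)
  -- candidate derivative
  set D : A →L[ℂ] ℂ := -c⁻¹ • (f'.comp ((ContinuousLinearMap.id ℂ A).prod 0)) with hD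
  have hDapp : ∀ h : A, D h = -(c⁻¹ * f' (h, 0)) := by
    intro h
    simp only [hD, ContinuousLinearMap.neg_apply, ContinuousLinearMap.smul_apply,
      ContinuousLinearMap.comp_apply, ContinuousLinearMap.prod_apply,
      ContinuousLinearMap.coe_id', id_eq, ContinuousLinearMap.zero_apply, smul_eq_mul]
    ring
  suffices hfd : HasFDerivAt g D x₁ from hfd.differentiableAt
  rw [hasFDerivAt_iff_isLittleO, Asymptotics.isLittleO_iff]
  intro ε hε
  have hε' : (0:ℝ) < ε * ‖c‖ / K := by positivity
  filter_upwards [herr (ε * ‖c‖ / K) hε', hlip] with x' h1 h2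
  set Δx := x' - x₁
  set Δg := g x' - g x₁
  have hmaxK : max ‖Δx‖ ‖Δg‖ ≤ K * ‖Δx‖ := by
    apply max_le _ h2
    calc ‖Δx‖ = 1 * ‖Δx‖ := (one_mul _).symm
    _ ≤ K * ‖Δx‖ := mul_le_mul_of_nonneg_right hK1 (norm_nonneg _)
  have hkey : g x' - g x₁ - D Δx = c⁻¹ * f' (Δx, Δg) := by
    rw [hDapp, hf'dec Δx Δg]
    field_simp
    ring
  rw [hkey]
  calc ‖c⁻¹ * f' (Δx, Δg)‖ = ‖c‖⁻¹ * ‖f' (Δx, Δg)‖ := by rw [norm_mul, norm_inv]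
  _ ≤ ‖c‖⁻¹ * (ε * ‖c‖ / K * max ‖Δx‖ ‖Δg‖) := by
      apply mul_le_mul_of_nonneg_left h1 (by positivity)
  _ ≤ ‖c‖⁻¹ * (ε * ‖c‖ / K * (K * ‖Δx‖)) := by
      apply mul_le_mul_of_nonneg_left _ (by positivity)
      apply mul_le_mul_of_nonneg_left hmaxK (by positivity)
  _ = ε * ‖Δx‖ := by
      have hc0 : ‖c‖ ≠ 0 := ne_of_gt hcpos
      have hK0 : K ≠ 0 := ne_of_gt hKpos
      field_simp

/-- Identity theorem for holomorphic functions on a connected open subset of `ℂⁿ`,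
proved by slicing along complex lines. -/
lemma identity_theorem {n : ℕ} {Δ : (Fin n → ℂ) → ℂ} {U : Set (Fin n → ℂ)}
    (hU : IsOpen U) (hUc : IsPreconnected U) (hd : DifferentiableOn ℂ Δ U)
    {x₀ : (Fin n → ℂ)} (hx₀ : x₀ ∈ U) (h0 : ∀ᶠ y in 𝓝 x₀, Δ y = 0) :
    ∀ y ∈ U, Δ y = 0 := by
  classical
  set S : Set (Fin n → ℂ) := {x | x ∈ U ∧ ∀ᶠ y in 𝓝 x, Δ y = 0} with hS
  -- S is open
  have hSopen : IsOpen S := by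
    rw [isOpen_iff_mem_nhds]
    rintro x ⟨hxU, hx⟩
    obtain ⟨O, hOsub, hOopen, hxO⟩ := _root_.eventually_nhds_iff.1 hx
    have : O ∩ U ⊆ S := by
      rintro y ⟨hyO, hyU⟩
      exact ⟨hyU, _root_.eventually_nhds_iff.2 ⟨O ∩ U, fun z hz => hOsub z hz.1,
        hOopen.inter hU, hyO, hyU⟩⟩
    exact Filter.mem_of_superset ((hOopen.inter hU).mem_nhds ⟨hxO, hxU⟩) this
  -- key: propagation along lines inside a ball
  have hball : ∀ x ∈ U, ∀ R > (0:ℝ), ball x R ⊆ U → ∀ y₀ ∈ S ∩ ball x R,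
      ∀ w ∈ ball x R, Δ w = 0 := by
    intro x hxU R hR hBU y₀ ⟨hy₀S, hy₀B⟩ w hwB
    set v : (Fin n → ℂ) := w - y₀ with hv
    set ℓ : ℂ → (Fin n → ℂ) := fun t => y₀ + t • v with hℓ
    have hℓ0 : ℓ 0 = y₀ := by simp [hℓ]
    have hℓ1 : ℓ 1 = w := by simp [hℓ, hv]
    set T : Set ℂ := ℓ ⁻¹' (ball x R) with hT
    have hℓaff : ∀ (a b : ℝ) (t₁ t₂ : ℂ), a + b = 1 →
        ℓ (a • t₁ + b • t₂) = a • ℓ t₁ + b • ℓ t₂ := by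
      intro a b t₁ t₂ hab
      simp only [hℓ]
      have : ((a:ℝ) • t₁ + (b:ℝ) • t₂) • v = a • (t₁ • v) + b • (t₂ • v) := by
        rw [add_smul]
        congr 1 <;> rw [smul_assoc]
      rw [this]
      rw [smul_add, smul_add]
      have hy : y₀ = a • y₀ + b • y₀ := by
        rw [← add_smul, hab, one_smul]
      conv_lhs => rw [hy]
      abel
    have hTconv : Convex ℝ T := by
      intro t₁ ht₁ t₂ ht₂ a b ha hb hab
      simp only [hT, Set.mem_preimage] at *
      rw [hℓaff a b t₁ t₂ hab]
      exact (convex_ball x R) ht₁ ht₂ ha hb hab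
    have hTopen : IsOpen T := (isOpen_ball).preimage (by fun_prop)
    have hℓdiff : Differentiable ℂ ℓ := by
      apply Differentiable.const_add
      exact (differentiable_id.smul_const v)
    have hfdiff : DifferentiableOn ℂ (Δ ∘ ℓ) T :=
      hd.comp (hℓdiff.differentiableOn) (fun t ht => hBU ht)
    have hfan := hfdiff.analyticOnNhd hTopen
    have h0T : (0:ℂ) ∈ T := by simp [hT, Set.mem_preimage, hℓ0]; exact hy₀B
    have h1T : (1:ℂ) ∈ T := by simp only [hT, Set.mem_preimage, hℓ1]; exact hwB
    have hev : (Δ ∘ ℓ) =ᶠ[𝓝 (0:ℂ)] 0 := by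
      have htend : Filter.Tendsto ℓ (𝓝 0) (𝓝 y₀) := by
        rw [← hℓ0]; exact (hℓdiff 0).continuousAt
      exact (htend.eventually hy₀S.2).mono (fun t ht => ht)
    have := hfan.eqOn_zero_of_preconnected_of_eventuallyEq_zero
      hTconv.isPreconnected h0T hev
    have := this h1T
    simpa [hℓ1] using this
  -- closure of S in U lands in S
  have hclos : ∀ x ∈ U, x ∈ closure S → x ∈ S := by
    intro x hxU hxc
    obtain ⟨R, hR, hBU⟩ := Metric.isOpen_iff.1 hU x hxU
    obtain ⟨y₀, hy₀S, hy₀d⟩ := Metric.mem_closure_iff.1 hxc R hR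
    have hy₀B : y₀ ∈ ball x R := by rw [mem_ball, dist_comm]; exact hy₀d
    have hz : ∀ w ∈ ball x R, Δ w = 0 := hball x hxU R hR hBU y₀ ⟨hy₀S, hy₀B⟩
    exact ⟨hxU, _root_.eventually_nhds_iff.2 ⟨ball x R, hz, isOpen_ball, mem_ball_self hR⟩⟩
  -- connectedness argument
  have hsub : U ⊆ S ∪ (closure S)ᶜ := by
    intro y hyU
    by_cases hy : y ∈ closure S
    · exact Or.inl (hclos y hyU hy)
    · exact Or.inr hy
  have hUS : U ⊆ S :=
    hUc.subset_left_of_subset_union hSopen (isClosed_closure.isOpen_compl)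
      (Set.disjoint_compl_right_iff_subset.2 subset_closure) hsub
      ⟨x₀, hx₀, hx₀, h0⟩
  intro y hyU
  exact ((hUS hyU).2).self_of_nhds


end StmtSevenHelpers

open Polynomial Filter Topology Metric in
theorem stmt_7 (n d : ℕ) (U : Set (Fin n → ℂ)) (hU : IsOpen U) (hUc : IsConnected U)
    (U' : Set ℂ) (hU' : IsOpen U') (hU'c : IsConnected U')
    (E : Set ((Fin n → ℂ) × ℂ))
    (hEan : IsAnalyticIn (U ×ˢ U') E)
    (hEdim : PureDim E n)
    (hEprop : ProperProjOn U E)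
    -- the optimal (unitary) polynomial p for E, given by holomorphic coefficients a
    (a : Fin d → (Fin n → ℂ) → ℂ) (ha : ∀ i, DifferentiableOn ℂ (a i) U)
    (p : (Fin n → ℂ) → Polynomial ℂ)
    (hp : ∀ x, p x = Polynomial.X ^ d +
      ∑ i : Fin d, Polynomial.C (a i x) * Polynomial.X ^ (d - 1 - (i : ℕ)))
    (hEdesc : E = {q : (Fin n → ℂ) × ℂ | q.1 ∈ U ∧ Polynomial.eval q.2 (p q.1) = 0})
    -- Δ is the discriminant of p: it vanishes exactly where p has a multiple root
    (Δ : (Fin n → ℂ) → ℂ) (hΔholo : DifferentiableOn ℂ Δ U)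
    (hΔ : ∀ x ∈ U, (Δ x = 0 ↔ ∃ z : ℂ,
      Polynomial.eval z (p x) = 0 ∧ Polynomial.eval z (Polynomial.derivative (p x)) = 0))
    (hΔne : ∃ x ∈ U, Δ x ≠ 0) :
    Prod.fst '' SingProj E = {x ∈ U | Δ x = 0} := by
  classical
  -- evaluation formulas
  have Feval : ∀ x' z', (p x').eval z' = z' ^ d +
      ∑ i : Fin d, a i x' * z' ^ (d - 1 - (i : ℕ)) := by
    intro x' z'
    rw [hp]
    simp [eval_finset_sum]
  have Deval : ∀ x' w, (derivative (p x')).eval w = (d : ℂ) * w ^ (d - 1) +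
      ∑ i : Fin d, a i x' * ((d - 1 - (i : ℕ) : ℕ) * w ^ (d - 1 - (i : ℕ) - 1)) := by
    intro x' w
    rw [hp]
    simp only [derivative_add, derivative_X_pow, map_sum, derivative_C_mul]
    simp [eval_finset_sum]
  -- the divided-difference polynomial
  set Rp : (Fin n → ℂ) → ℂ → Polynomial ℂ :=
    fun x' w => Spol d w + ∑ i : Fin d, Polynomial.C (a i x') * Spol (d - 1 - (i : ℕ)) w
    with hRp
  have Reval : ∀ x' w z', (Rp x' w).eval z' = (Spol d w).eval z' +
      ∑ i : Fin d, a i x' * (Spol (d - 1 - (i : ℕ)) w).eval z' := by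
    intro x' w z'
    simp [hRp, eval_finset_sum]
  have P2 : ∀ x' z' w, (p x').eval z' - (p x').eval w
      = (z' - w) * (Rp x' w).eval z' := by
    intro x' z' w
    rw [Feval, Feval, Reval, mul_add, Finset.mul_sum]
    have h1 : ∀ m : ℕ, (z' - w) * (Spol m w).eval z' = z' ^ m - w ^ m := by
      intro m; rw [mul_comm]; exact Spol_eval_mul m w z'
    rw [h1 d]
    rw [Finset.sum_congr rfl (fun i _ => by
      rw [mul_comm (z' - w) (a i x' * _), mul_assoc, mul_comm _ (z' - w), h1, mul_sub] :
      ∀ i ∈ Finset.univ, (z' - w) * (a i x' * (Spol (d - 1 - (i:ℕ)) w).eval z')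
        = a i x' * z' ^ (d - 1 - (i:ℕ)) - a i x' * w ^ (d - 1 - (i:ℕ)))]
    rw [Finset.sum_sub_distrib]
    ring
  have P3 : ∀ x' w, (Rp x' w).eval w = (derivative (p x')).eval w := by
    intro x' w
    rw [Reval, Deval, Spol_eval_self]
    congr 1
    apply Finset.sum_congr rfl
    intro i _
    rw [Spol_eval_self]
  -- monicity facts
  have pmonic : 1 ≤ d → ∀ x', (p x').Monic ∧ (p x').natDegree = d := by
    intro hd1 x'
    rw [hp]
    have hX : (Polynomial.X ^ d : Polynomial ℂ).Monic := monic_X_pow d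
    have hXdeg : (Polynomial.X ^ d : Polynomial ℂ).natDegree = d := natDegree_X_pow d
    have hsum : (∑ i : Fin d, Polynomial.C (a i x') * Polynomial.X ^ (d - 1 - (i:ℕ))).natDegree
        ≤ d - 1 := by
      apply natDegree_sum_le_of_forall_le
      intro i _
      calc (Polynomial.C (a i x') * Polynomial.X ^ (d - 1 - (i:ℕ))).natDegree
          ≤ (Polynomial.X ^ (d - 1 - (i:ℕ)) : Polynomial ℂ).natDegree :=
            natDegree_C_mul_le _ _
      _ = d - 1 - (i:ℕ) := natDegree_X_pow _
      _ ≤ d - 1 := by omega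
    have := monic_add_aux (Q := ∑ i : Fin d, Polynomial.C (a i x') * Polynomial.X ^ (d - 1 - (i:ℕ)))
      hX (by rw [hXdeg]; exact lt_of_le_of_lt hsum (by omega))
    rw [hXdeg] at this
    exact this
  have Rmonic : 2 ≤ d → ∀ x' w, (Rp x' w).Monic ∧ (Rp x' w).natDegree = d - 1 := by
    intro hd2 x' w
    have hS := Spol_monic d (by omega) w
    have hsum : (∑ i : Fin d, Polynomial.C (a i x') * Spol (d - 1 - (i:ℕ)) w).natDegree
        ≤ d - 2 := by
      apply natDegree_sum_le_of_forall_le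
      intro i _
      calc (Polynomial.C (a i x') * Spol (d - 1 - (i:ℕ)) w).natDegree
          ≤ (Spol (d - 1 - (i:ℕ)) w).natDegree := natDegree_C_mul_le _ _
      _ ≤ d - 1 - (i:ℕ) - 1 := Spol_natDegree_le _ _
      _ ≤ d - 2 := by omega
    have := monic_add_aux (Q := ∑ i : Fin d, Polynomial.C (a i x') * Spol (d - 1 - (i:ℕ)) w)
      hS.1 (by rw [hS.2]; exact lt_of_le_of_lt hsum (by omega))
    rw [hS.2] at this
    exact this
  -- continuity of coefficients
  have haCA : ∀ i, ∀ x ∈ U, ContinuousAt (a i) x := by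
    intro i x hx
    exact ((ha i).differentiableAt (hU.mem_nhds hx)).continuousAt
  -- joint function F
  set F : (Fin n → ℂ) × ℂ → ℂ := fun q => (p q.1).eval q.2 with hFdef
  have hFdiffAt : ∀ q : (Fin n → ℂ) × ℂ, q.1 ∈ U → DifferentiableAt ℂ F q := by
    intro q hq
    have hFeq : F = fun q : (Fin n → ℂ) × ℂ =>
        q.2 ^ d + ∑ i : Fin d, a i q.1 * q.2 ^ (d - 1 - (i:ℕ)) :=
      funext fun q => Feval q.1 q.2
    rw [hFeq]
    apply DifferentiableAt.add
    · exact differentiableAt_snd.pow d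
    · apply DifferentiableAt.fun_sum
      intro i _
      exact (((ha i).differentiableAt (hU.mem_nhds hq)).comp q
        differentiableAt_fst).mul (differentiableAt_snd.pow _)
  have hFderiv : ∀ q : (Fin n → ℂ) × ℂ, q.1 ∈ U →
      (fderiv ℂ F q) (0, 1) = (derivative (p q.1)).eval q.2 := by
    intro q hq
    have hFd : HasFDerivAt F (fderiv ℂ F q) q := (hFdiffAt q hq).hasFDerivAt
    set J : ℂ →L[ℂ] (Fin n → ℂ) × ℂ :=
      (0 : ℂ →L[ℂ] (Fin n → ℂ)).prod (ContinuousLinearMap.id ℂ ℂ) with hJ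
    have hι : HasFDerivAt (fun t : ℂ => (q.1, t)) J q.2 :=
      HasFDerivAt.prodMk (hasFDerivAt_const q.1 q.2) (hasFDerivAt_id q.2)
    have hFd' : HasFDerivAt F (fderiv ℂ F q) (q.1, q.2) := by
      rw [Prod.mk.eta]; exact hFd
    have hcomp : HasFDerivAt (fun t : ℂ => F (q.1, t)) ((fderiv ℂ F q).comp J) q.2 :=
      hFd'.comp q.2 hι
    have hder1 : HasDerivAt (fun t : ℂ => F (q.1, t)) ((fderiv ℂ F q).comp J 1) q.2 :=
      hcomp.hasDerivAt
    have hder2 : HasDerivAt (fun t : ℂ => F (q.1, t)) ((derivative (p q.1)).eval q.2) q.2 :=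
      Polynomial.hasDerivAt (p q.1) q.2
    have := hder1.unique hder2
    rw [← this]
    simp [hJ, ContinuousLinearMap.comp_apply, ContinuousLinearMap.prod_apply]
  have hEmem : ∀ r : (Fin n → ℂ) × ℂ, r ∈ E ↔ r.1 ∈ U ∧ (p r.1).eval r.2 = 0 := by
    intro r; rw [hEdesc]; exact Iff.rfl
  have hpcontw : ∀ w, ContinuousOn (fun x' => (p x').eval w) U := by
    intro w
    have heq : (fun x' => (p x').eval w)
        = fun x' => w ^ d + ∑ i : Fin d, a i x' * w ^ (d - 1 - (i:ℕ)) :=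
      funext fun x' => Feval x' w
    rw [heq]
    apply ContinuousOn.add continuousOn_const
    apply continuousOn_finset_sum
    intro i _
    exact ((ha i).continuousOn).mul continuousOn_const
  apply Set.Subset.antisymm
  · rintro x ⟨q, ⟨hqE, hqnreg⟩, rfl⟩
    obtain ⟨hx₀U, hroot⟩ := (hEmem q).1 hqE
    set x₀ := q.1 with hx₀def
    set z₀ := q.2 with hz₀def
    refine ⟨hx₀U, ?_⟩
    by_contra hΔx
    apply hqnreg
    have hd1 : 1 ≤ d := by
      rcases Nat.eq_zero_or_pos d with h0 | h1
      · exfalso; rw [Feval] at hroot; subst h0; simp at hroot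
      · exact h1
    have hc₀ : (derivative (p x₀)).eval z₀ ≠ 0 := fun h => hΔx ((hΔ x₀ hx₀U).2 ⟨z₀, hroot, h⟩)
    -- nonvanishing neighborhood for the divided difference
    have hHcont : ContinuousAt (fun t : (Fin n → ℂ) × ℂ × ℂ => (Rp t.1 t.2.2).eval t.2.1)
        (x₀, z₀, z₀) := by
      have heq : (fun t : (Fin n → ℂ) × ℂ × ℂ => (Rp t.1 t.2.2).eval t.2.1)
          = fun t => (Spol d t.2.2).eval t.2.1
            + ∑ i : Fin d, a i t.1 * (Spol (d - 1 - (i:ℕ)) t.2.2).eval t.2.1 :=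
        funext fun t => Reval t.1 t.2.2 t.2.1
      rw [heq]
      have hS : ∀ m : ℕ, Continuous
          (fun t : (Fin n → ℂ) × ℂ × ℂ => (Spol m t.2.2).eval t.2.1) := by
        intro m
        have heq2 : (fun t : (Fin n → ℂ) × ℂ × ℂ => (Spol m t.2.2).eval t.2.1)
            = fun t => ∑ j ∈ Finset.range m, t.2.1 ^ j * t.2.2 ^ (m - 1 - j) :=
          funext fun t => Spol_eval m t.2.2 t.2.1
        rw [heq2]
        fun_prop
      apply ContinuousAt.add ((hS d).continuousAt)
      apply tendsto_finset_sum
      intro i _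
      exact ((haCA i x₀ hx₀U).comp (continuousAt_fst)).mul ((hS _).continuousAt)
    have hH0 : (Rp x₀ z₀).eval z₀ ≠ 0 := by rw [P3]; exact hc₀
    have hev : ∀ᶠ t in 𝓝 ((x₀, z₀, z₀) : (Fin n → ℂ) × ℂ × ℂ),
        (Rp t.1 t.2.2).eval t.2.1 ≠ 0 := hHcont.eventually_ne hH0
    obtain ⟨ε, hε, hεH⟩ := Metric.eventually_nhds_iff.1 hev
    -- uniqueness of roots near z₀
    have huniq : ∀ x', dist x' x₀ < ε → ∀ ζ ζ', (p x').IsRoot ζ → (p x').IsRoot ζ' →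
        dist ζ z₀ < ε → dist ζ' z₀ < ε → ζ = ζ' := by
      intro x' hx' ζ ζ' hζ hζ' hζd hζ'd
      have hdist : dist ((x', ζ', ζ) : (Fin n → ℂ) × ℂ × ℂ) ((x₀, z₀, z₀)) < ε := by
        rw [Prod.dist_eq, Prod.dist_eq]
        simp only [max_lt_iff]
        exact ⟨hx', hζ'd, hζd⟩
      have hne : (Rp x' ζ).eval ζ' ≠ 0 := hεH hdist
      have h2 := P2 x' ζ' ζ
      rw [hζ, hζ', sub_zero] at h2
      have h3 : (ζ' - ζ) * (Rp x' ζ).eval ζ' = 0 := h2.symm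
      rcases mul_eq_zero.1 h3 with h | h
      · exact (sub_eq_zero.1 h).symm
      · exact absurd h hne
    -- the base open set and the implicit function
    set Wset : Set (Fin n → ℂ) := (ball x₀ ε ∩ U) ∩
      (fun x' => (p x').eval z₀) ⁻¹' (ball 0 ((ε/2) ^ d)) with hWset
    have hWopen : IsOpen Wset :=
      ContinuousOn.isOpen_inter_preimage
        ((hpcontw z₀).mono (Set.inter_subset_right)) (isOpen_ball.inter hU) isOpen_ball
    have hWU : ∀ x' ∈ Wset, x' ∈ U := fun x' hx' => hx'.1.2
    have hWb : ∀ x' ∈ Wset, dist x' x₀ < ε := fun x' hx' => mem_ball.1 hx'.1.1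
    have hx₀W : x₀ ∈ Wset := by
      refine ⟨⟨mem_ball_self hε, hx₀U⟩, ?_⟩
      simp only [Set.mem_preimage, mem_ball_zero_iff, hroot, norm_zero]
      positivity
    have hexr : ∀ x' ∈ Wset, ∃ ζ, (p x').IsRoot ζ ∧ ζ ∈ ball z₀ (ε/2) := by
      intro x' hx'
      obtain ⟨ζ, hζr, hζb⟩ := exists_root_near (p x') (pmonic hd1 x').1
        (by rw [(pmonic hd1 x').2]; exact hd1) z₀
      rw [(pmonic hd1 x').2] at hζb
      refine ⟨ζ, hζr, ?_⟩
      rw [mem_ball, dist_comm, dist_eq_norm]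
      have hval : ‖(p x').eval z₀‖ < (ε/2) ^ d := by
        have := hx'.2
        rwa [Set.mem_preimage, mem_ball_zero_iff] at this
      exact lt_of_pow_lt_pow_left₀ d (by positivity) (lt_of_le_of_lt hζb hval)
    set g : (Fin n → ℂ) → ℂ := fun x' =>
      if h : ∃ ζ, (p x').IsRoot ζ ∧ ζ ∈ ball z₀ (ε/2) then h.choose else 0 with hgdef
    have hgspec : ∀ x' ∈ Wset, (p x').IsRoot (g x') ∧ g x' ∈ ball z₀ (ε/2) := by
      intro x' hx'
      have h := hexr x' hx'
      rw [hgdef]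
      simp only [dif_pos h]
      exact h.choose_spec
    -- continuity of g on Wset
    have hgcont : ∀ x₁ ∈ Wset, ContinuousAt g x₁ := by
      intro x₁ hx₁
      rw [ContinuousAt, Metric.tendsto_nhds]
      intro ε' hε'
      set δ : ℝ := min ε' (ε/4) with hδdef
      have hδ : 0 < δ := lt_min hε' (by positivity)
      have hcontAt : ContinuousAt (fun x' => (p x').eval (g x₁)) x₁ :=
        (hpcontw (g x₁)).continuousAt (hU.mem_nhds (hWU x₁ hx₁))
      have hval1 : (fun x' => (p x').eval (g x₁)) x₁ = 0 := (hgspec x₁ hx₁).1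
      have hev2 : ∀ᶠ x' in 𝓝 x₁, ‖(p x').eval (g x₁)‖ < δ ^ d := by
        have : Filter.Tendsto (fun x' => (p x').eval (g x₁)) (𝓝 x₁) (𝓝 0) := by
          rw [← hval1]; exact hcontAt
        have h4 : {v : ℂ | ‖v‖ < δ ^ d} ∈ 𝓝 (0:ℂ) := by
          have : IsOpen {v : ℂ | ‖v‖ < δ ^ d} := isOpen_lt (by fun_prop) continuous_const
          exact this.mem_nhds (by simp; positivity)
        exact this.eventually h4
      filter_upwards [hev2, hWopen.mem_nhds hx₁] with x' hx'v hx'W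
      -- find a root of p x' near g x₁
      obtain ⟨ζ', hζ'r, hζ'b⟩ := exists_root_near (p x') (pmonic hd1 x').1
        (by rw [(pmonic hd1 x').2]; exact hd1) (g x₁)
      rw [(pmonic hd1 x').2] at hζ'b
      have hζ'close : dist ζ' (g x₁) < δ := by
        rw [dist_comm, dist_eq_norm]
        exact lt_of_pow_lt_pow_left₀ d (le_of_lt hδ) (lt_of_le_of_lt hζ'b hx'v)
      have hζ'ball : dist ζ' z₀ < ε := by
        calc dist ζ' z₀ ≤ dist ζ' (g x₁) + dist (g x₁) z₀ := dist_triangle _ _ _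
        _ < δ + ε/2 := add_lt_add hζ'close (mem_ball.1 (hgspec x₁ hx₁).2)
        _ ≤ ε/4 + ε/2 := add_le_add (min_le_right _ _) le_rfl
        _ < ε := by linarith
      have hgball : dist (g x') z₀ < ε :=
        lt_trans (mem_ball.1 (hgspec x' hx'W).2) (by linarith)
      have := huniq x' (hWb x' hx'W) ζ' (g x') hζ'r (hgspec x' hx'W).1 hζ'ball hgball
      rw [← this]
      exact lt_of_lt_of_le hζ'close (min_le_left _ _)
    -- differentiability of g on Wset
    have hgdiff : DifferentiableOn ℂ g Wset := by
      intro x₁ hx₁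
      apply DifferentiableAt.differentiableWithinAt
      apply implicit_diff (F := F) (hFdiffAt (x₁, g x₁) (hWU x₁ hx₁)).hasFDerivAt
        ?_ (hgcont x₁ hx₁) ?_
      · rw [show ((0:Fin n → ℂ), (1:ℂ)) = ((0,1) : (Fin n → ℂ) × ℂ) from rfl]
        rw [hFderiv (x₁, g x₁) (hWU x₁ hx₁)]
        show (derivative (p x₁)).eval (g x₁) ≠ 0
        rw [← P3]
        have hgb : dist (g x₁) z₀ < ε := lt_trans (mem_ball.1 (hgspec x₁ hx₁).2) (by linarith)
        have hdist : dist ((x₁, g x₁, g x₁) : (Fin n → ℂ) × ℂ × ℂ) ((x₀, z₀, z₀)) < ε := by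
          rw [Prod.dist_eq, Prod.dist_eq]
          simp only [max_lt_iff]
          exact ⟨hWb x₁ hx₁, hgb, hgb⟩
        exact hεH hdist
      · filter_upwards [hWopen.mem_nhds hx₁] with x' hx'
        exact (hgspec x' hx').1
    -- the graph property
    refine ⟨Wset, hWopen, hx₀W, g, hgdiff, Wset ×ˢ ball z₀ (ε/2),
      hWopen.prod isOpen_ball, ⟨hx₀W, mem_ball_self (by positivity)⟩, ?_⟩
    ext r
    simp only [Set.mem_inter_iff, Set.mem_prod, Set.mem_setOf_eq]
    constructor
    · rintro ⟨hrE, hrW, hrB⟩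
      refine ⟨⟨hrW, ?_⟩, hrW, hrB⟩
      obtain ⟨hr1, hr2⟩ := (hEmem r).1 hrE
      apply huniq r.1 (hWb r.1 hrW) r.2 (g r.1) hr2 (hgspec r.1 hrW).1
        (lt_trans (mem_ball.1 hrB) (by linarith))
        (lt_trans (mem_ball.1 (hgspec r.1 hrW).2) (by linarith))
    · rintro ⟨⟨hrW, hrg⟩, _, hrB⟩
      refine ⟨(hEmem r).2 ⟨hWU r.1 hrW, ?_⟩, hrW, hrB⟩
      rw [hrg]
      exact (hgspec r.1 hrW).1
  · rintro x ⟨hxU, hΔx⟩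
    obtain ⟨z, hz1, hz2⟩ := (hΔ x hxU).1 hΔx
    have hxzE : (x, z) ∈ E := (hEmem (x, z)).2 ⟨hxU, hz1⟩
    refine ⟨(x, z), ⟨hxzE, ?_⟩, rfl⟩
    rintro ⟨W, hWopen, hxW, g, hgdiff, V, hVopen, hxzV, hEV⟩
    have hzg : z = g x := by
      have hmem : (x, z) ∈ {q : (Fin n → ℂ) × ℂ | q.1 ∈ W ∧ q.2 = g q.1} ∩ V := by
        rw [← hEV]; exact ⟨hxzE, hxzV⟩
      exact hmem.1.2
    have hd2 : 2 ≤ d := by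
      by_contra h
      push_neg at h
      have hcase : d = 0 ∨ d = 1 := by omega
      rcases hcase with h0 | h1
      · rw [Feval] at hz1
        have hemp : IsEmpty (Fin d) := by rw [h0]; infer_instance
        rw [Finset.univ_eq_empty, Finset.sum_empty, h0, pow_zero] at hz1
        simp at hz1
      · rw [Deval] at hz2
        have hzero : ∀ i : Fin d, ((d - 1 - (i:ℕ) : ℕ) : ℂ) = 0 := by
          intro i
          have hi := i.2
          have : d - 1 - (i:ℕ) = 0 := by omega
          rw [this, Nat.cast_zero]
        rw [Finset.sum_congr rfl (fun i _ => by rw [hzero i, zero_mul, mul_zero] :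
          ∀ i ∈ Finset.univ, a i x * (((d - 1 - (i:ℕ) : ℕ) : ℂ) * z ^ (d - 1 - (i:ℕ) - 1))
            = 0)] at hz2
        rw [Finset.sum_const_zero, add_zero, h1] at hz2
        simp at hz2
    set m := d - 1 with hmdef
    have hm1 : 1 ≤ m := by omega
    have hgcx : ContinuousAt g x :=
      (hgdiff.differentiableAt (hWopen.mem_nhds hxW)).continuousAt
    obtain ⟨ε, hε, hεV⟩ := Metric.isOpen_iff.1 hVopen (x, z) hxzV
    -- continuity of ψ
    have hS2 : ∀ m' : ℕ, Continuous (fun w : ℂ => (Spol m' w).eval z) := by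
      intro m'
      have heq : (fun w : ℂ => (Spol m' w).eval z)
          = fun w => ∑ j ∈ Finset.range m', z ^ j * w ^ (m' - 1 - j) :=
        funext fun w => Spol_eval m' w z
      rw [heq]
      fun_prop
    have hψcont : ContinuousAt (fun x' => (Rp x' (g x')).eval z) x := by
      have heq : (fun x' => (Rp x' (g x')).eval z)
          = fun x' => (Spol d (g x')).eval z
            + ∑ i : Fin d, a i x' * (Spol (d - 1 - (i:ℕ)) (g x')).eval z :=
        funext fun x' => Reval x' (g x') z
      rw [heq]
      apply ContinuousAt.add (((hS2 d).continuousAt).comp hgcx)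
      apply tendsto_finset_sum
      intro i _
      exact (haCA i x hxU).mul (((hS2 _).continuousAt).comp hgcx)
    have hψ0 : (Rp x (g x)).eval z = 0 := by
      rw [← hzg, P3]; exact hz2
    -- everything eventually
    have hevents : ∀ᶠ x' in 𝓝 x, Δ x' = 0 := by
      have e1 : ∀ᶠ x' in 𝓝 x, x' ∈ W := hWopen.eventually_mem hxW
      have e2 : ∀ᶠ x' in 𝓝 x, x' ∈ U := hU.eventually_mem hxU
      have e3 : ∀ᶠ x' in 𝓝 x, (x', g x') ∈ V := by
        have htd : Filter.Tendsto (fun x' => (x', g x')) (𝓝 x) (𝓝 (x, g x)) :=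
          continuousAt_id.prodMk hgcx
        exact htd.eventually (hVopen.eventually_mem (by rw [← hzg]; exact hxzV))
      have e4 : ∀ᶠ x' in 𝓝 x, ‖(Rp x' (g x')).eval z‖ < (ε/2) ^ m := by
        have htd : Filter.Tendsto (fun x' => (Rp x' (g x')).eval z) (𝓝 x) (𝓝 0) := by
          rw [← hψ0]; exact hψcont
        have h4 : {v : ℂ | ‖v‖ < (ε/2) ^ m} ∈ 𝓝 (0:ℂ) := by
          have ho : IsOpen {v : ℂ | ‖v‖ < (ε/2) ^ m} := isOpen_lt (by fun_prop) continuous_const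
          exact ho.mem_nhds (by simp; positivity)
        exact htd.eventually h4
      have e5 : ∀ᶠ x' in 𝓝 x, dist x' x < ε/2 := by
        have := Metric.ball_mem_nhds x (show (0:ℝ) < ε/2 by positivity)
        filter_upwards [this] with x' hx'
        exact mem_ball.1 hx'
      filter_upwards [e1, e2, e3, e4, e5] with x' h1 h2 h3 h4 h5
      have hgr : (p x').eval (g x') = 0 := by
        have hmem : (x', g x') ∈ E ∩ V := by
          rw [hEV]; exact ⟨⟨h1, rfl⟩, h3⟩
        exact ((hEmem _).1 hmem.1).2
      obtain ⟨ζ, hζr, hζb⟩ := exists_root_near (Rp x' (g x')) (Rmonic hd2 x' (g x')).1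
        (by rw [(Rmonic hd2 x' (g x')).2]; omega) z
      rw [(Rmonic hd2 x' (g x')).2] at hζb
      have hζclose : dist ζ z < ε/2 := by
        rw [dist_comm, dist_eq_norm]
        exact lt_of_pow_lt_pow_left₀ m (by positivity) (lt_of_le_of_lt hζb h4)
      have hζroot : (p x').eval ζ = 0 := by
        have hP2 := P2 x' ζ (g x')
        rw [hgr, sub_zero] at hP2
        rw [hP2, hζr, mul_zero]
      have hζV : (x', ζ) ∈ V := by
        apply hεV
        rw [mem_ball, Prod.dist_eq]
        simp only [max_lt_iff]
        constructor
        · exact lt_trans h5 (by linarith)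
        · exact lt_trans hζclose (by linarith)
      have hmem2 : (x', ζ) ∈ {q : (Fin n → ℂ) × ℂ | q.1 ∈ W ∧ q.2 = g q.1} ∩ V := by
        rw [← hEV]
        exact ⟨(hEmem _).2 ⟨h2, hζroot⟩, hζV⟩
      have hζg : ζ = g x' := hmem2.1.2
      apply (hΔ x' h2).2
      refine ⟨g x', hgr, ?_⟩
      rw [← P3]
      rw [hζg] at hζr
      exact hζr
    obtain ⟨y, hyU, hyΔ⟩ := hΔne
    exact hyΔ (identity_theorem hU hUc.isPreconnected hΔholo hxU hevents y hyU)
end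

section
/- Let W(x) = x_n^d + a₁(x') x_n^{d−1} + ⋯ + a_d(x'), r_j(x) = Σ_{i=0}^{2d−1} b_{j,i}(x') x_n^{2d−1−i} for j = 1,…,m, and r̃(x) = Σ_{i=0}^{2d−1} c_i(x') x_n^{2d−1−i} be polynomials in x_n with coefficients that are indeterminates, let H₁,…,H_m, H̃ be further indeterminates, and let P_L(y₁,…,y_m,z) be a polynomial. Then there exist polynomials W̃, W̄ and polynomials T₁,…,T_{3d} depending only on the variables a_i, b_{j,i}, c_i (not on H₁,…,H_m, H̃) such that P_L(W²H₁+r₁,…,W²H_m+r_m, W²H̃+r̃) = W̃·W² + x_n^{2d−1}T₁ + x_n^{2d−2}T₂ + ⋯ + T_{2d} and (∂P_L/∂z)(W²H₁+r₁,…,W²H_m+r_m, W²H̃+r̃) = W̄·W + x_n^{d−1}T_{2d+1} + ⋯ + T_{3d}. -/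
open Polynomial

/-- Variables standing for the coefficients `a_i` of `W`, `b_{j,i}` of `r_j`
and `c_i` of `r̃`. -/
abbrev sigABC (m d : ℕ) : Type := Fin d ⊕ ((Fin m × Fin (2 * d)) ⊕ Fin (2 * d))

/-- All variables: coefficient variables together with `H₁,…,H_m` and `H̃`. -/
abbrev sigAll (m d : ℕ) : Type := sigABC m d ⊕ (Fin m ⊕ Unit)

/-- The generic monic polynomial `W = x_n^d + a₁ x_n^{d-1} + ⋯ + a_d`. -/
noncomputable def Wgen (m d : ℕ) : Polynomial (MvPolynomial (sigAll m d) ℂ) :=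
  X ^ d + ∑ i : Fin d,
    C (MvPolynomial.X (Sum.inl (Sum.inl i))) * X ^ (d - 1 - (i : ℕ))

/-- The generic polynomial `r_j = Σ b_{j,i} x_n^{2d-1-i}`. -/
noncomputable def rgen (m d : ℕ) (j : Fin m) : Polynomial (MvPolynomial (sigAll m d) ℂ) :=
  ∑ i : Fin (2 * d),
    C (MvPolynomial.X (Sum.inl (Sum.inr (Sum.inl (j, i))))) * X ^ (2 * d - 1 - (i : ℕ))

/-- The generic polynomial `r̃ = Σ c_i x_n^{2d-1-i}`. -/
noncomputable def rtgen (m d : ℕ) : Polynomial (MvPolynomial (sigAll m d) ℂ) :=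
  ∑ i : Fin (2 * d),
    C (MvPolynomial.X (Sum.inl (Sum.inr (Sum.inr i)))) * X ^ (2 * d - 1 - (i : ℕ))

/-- The indeterminate `H_j`. -/
noncomputable def Hgen (m d : ℕ) (j : Fin m) : MvPolynomial (sigAll m d) ℂ :=
  MvPolynomial.X (Sum.inr (Sum.inl j))

/-- The indeterminate `H̃`. -/
noncomputable def Htgen (m d : ℕ) : MvPolynomial (sigAll m d) ℂ :=
  MvPolynomial.X (Sum.inr (Sum.inr ()))

/-- Substitution `y_j ↦ W²H_j + r_j` turning a polynomial in `y₁,…,y_m` into a polynomial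
in `x_n` over the ring of all the indeterminates. -/
noncomputable def substHom (m d : ℕ) :
    MvPolynomial (Fin m) ℂ →+* Polynomial (MvPolynomial (sigAll m d) ℂ) :=
  MvPolynomial.eval₂Hom
    ((Polynomial.C : MvPolynomial (sigAll m d) ℂ →+* Polynomial (MvPolynomial (sigAll m d) ℂ)).comp
      (MvPolynomial.C : ℂ →+* MvPolynomial (sigAll m d) ℂ))
    (fun j => (Wgen m d) ^ 2 * C (Hgen m d j) + rgen m d j)

/-- The renaming ring hom from the small variable ring to the full variable ring. -/
noncomputable def phiR (m d : ℕ) : MvPolynomial (sigABC m d) ℂ →+* MvPolynomial (sigAll m d) ℂ :=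
  (MvPolynomial.rename (Sum.inl : sigABC m d → sigAll m d)).toRingHom

/-- `W` over the small variable ring. -/
noncomputable def W0 (m d : ℕ) : Polynomial (MvPolynomial (sigABC m d) ℂ) :=
  X ^ d + ∑ i : Fin d, C (MvPolynomial.X (Sum.inl i)) * X ^ (d - 1 - (i : ℕ))

/-- `r_j` over the small variable ring. -/
noncomputable def r0 (m d : ℕ) (j : Fin m) : Polynomial (MvPolynomial (sigABC m d) ℂ) :=
  ∑ i : Fin (2 * d), C (MvPolynomial.X (Sum.inr (Sum.inl (j, i)))) * X ^ (2 * d - 1 - (i : ℕ))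

/-- `r̃` over the small variable ring. -/
noncomputable def rt0 (m d : ℕ) : Polynomial (MvPolynomial (sigABC m d) ℂ) :=
  ∑ i : Fin (2 * d), C (MvPolynomial.X (Sum.inr (Sum.inr i))) * X ^ (2 * d - 1 - (i : ℕ))

/-- Substitution `y_j ↦ r_j` over the small ring. -/
noncomputable def f0 (m d : ℕ) :
    MvPolynomial (Fin m) ℂ →+* Polynomial (MvPolynomial (sigABC m d) ℂ) :=
  MvPolynomial.eval₂Hom
    ((Polynomial.C :
        MvPolynomial (sigABC m d) ℂ →+* Polynomial (MvPolynomial (sigABC m d) ℂ)).comp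
      (MvPolynomial.C : ℂ →+* MvPolynomial (sigABC m d) ℂ))
    (r0 m d)

lemma map_W0 (m d : ℕ) : (W0 m d).map (phiR m d) = Wgen m d := by
  simp [W0, Wgen, phiR, Polynomial.map_add, Polynomial.map_pow, Polynomial.map_sum,
    Polynomial.map_mul, Polynomial.map_C]

lemma map_r0 (m d : ℕ) (j : Fin m) : (r0 m d j).map (phiR m d) = rgen m d j := by
  simp [r0, rgen, phiR, Polynomial.map_sum, Polynomial.map_mul, Polynomial.map_pow,
    Polynomial.map_C]

lemma map_rt0 (m d : ℕ) : (rt0 m d).map (phiR m d) = rtgen m d := by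
  simp [rt0, rtgen, phiR, Polynomial.map_sum, Polynomial.map_mul, Polynomial.map_pow,
    Polynomial.map_C]

lemma degree_sum_lt (m d : ℕ) (hd : 0 < d) :
    (∑ i : Fin d, C (MvPolynomial.X (Sum.inl i) :
        MvPolynomial (sigABC m d) ℂ) * X ^ (d - 1 - (i : ℕ))).degree < (d : WithBot ℕ) := by
  refine lt_of_le_of_lt (Polynomial.degree_sum_le _ _) ?_
  rw [Finset.sup_lt_iff (by exact_mod_cast WithBot.bot_lt_coe d)]
  intro i _
  refine lt_of_le_of_lt (Polynomial.degree_C_mul_X_pow_le _ _) ?_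
  exact_mod_cast lt_of_le_of_lt (Nat.sub_le _ _) (Nat.sub_lt hd one_pos)

lemma monic_W0 (m d : ℕ) (hd : 0 < d) : (W0 m d).Monic := by
  refine (monic_X_pow d).add_of_left ?_
  rw [degree_X_pow]
  exact degree_sum_lt m d hd

lemma degree_W0 (m d : ℕ) (hd : 0 < d) : (W0 m d).degree = (d : WithBot ℕ) := by
  rw [W0, degree_add_eq_left_of_degree_lt, degree_X_pow]
  rw [degree_X_pow]
  exact degree_sum_lt m d hd

/-- Key lemma: modulo a monic `M₀` (over the small ring) whose image divides `Wgen²`,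
the big substitution agrees with the small one. -/
lemma key_s14 (m d : ℕ) (M₀ : Polynomial (MvPolynomial (sigABC m d) ℂ)) (hM : M₀.Monic)
    (hdvd : M₀.map (phiR m d) ∣ (Wgen m d) ^ 2)
    (P : Polynomial (MvPolynomial (Fin m) ℂ)) :
    ∃ Wt, Polynomial.eval₂ (substHom m d) ((Wgen m d) ^ 2 * C (Htgen m d) + rtgen m d) P
      = Wt * M₀.map (phiR m d) +
        (Polynomial.eval₂ (f0 m d) (rt0 m d) P %ₘ M₀).map (phiR m d) := by
  set I : Ideal (Polynomial (MvPolynomial (sigAll m d) ℂ)) :=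
    Ideal.span {M₀.map (phiR m d)} with hI
  set π := Ideal.Quotient.mk I with hπ
  set Q : Polynomial (MvPolynomial (sigABC m d) ℂ) :=
    Polynomial.eval₂ (f0 m d) (rt0 m d) P with hQ
  have hmemW2 : (Wgen m d) ^ 2 ∈ I := Ideal.mem_span_singleton.mpr hdvd
  have h1 : π.comp (substHom m d) =
      (π.comp (Polynomial.mapRingHom (phiR m d))).comp (f0 m d) := by
    apply MvPolynomial.ringHom_ext
    · intro r
      simp [substHom, f0, phiR]
    · intro j
      simp only [RingHom.comp_apply, substHom, f0, MvPolynomial.eval₂Hom_X',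
        Polynomial.coe_mapRingHom]
      rw [map_r0]
      rw [hπ, Ideal.Quotient.mk_eq_mk_iff_sub_mem]
      have : (Wgen m d) ^ 2 * C (Hgen m d j) + rgen m d j - rgen m d j
          = (Wgen m d) ^ 2 * C (Hgen m d j) := by ring
      rw [this]
      exact I.mul_mem_right _ hmemW2
  have h2 : π ((Wgen m d) ^ 2 * C (Htgen m d) + rtgen m d)
      = π ((Polynomial.mapRingHom (phiR m d)) (rt0 m d)) := by
    simp only [Polynomial.coe_mapRingHom]
    rw [map_rt0, hπ, Ideal.Quotient.mk_eq_mk_iff_sub_mem]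
    have : (Wgen m d) ^ 2 * C (Htgen m d) + rtgen m d - rtgen m d
        = (Wgen m d) ^ 2 * C (Htgen m d) := by ring
    rw [this]
    exact I.mul_mem_right _ hmemW2
  have h3 : π (Polynomial.eval₂ (substHom m d) ((Wgen m d) ^ 2 * C (Htgen m d) + rtgen m d) P)
      = π ((Polynomial.mapRingHom (phiR m d)) Q) := by
    rw [Polynomial.hom_eval₂, hQ, Polynomial.hom_eval₂, Polynomial.hom_eval₂, h1, h2]
    rfl
  rw [hπ, Ideal.Quotient.mk_eq_mk_iff_sub_mem, hI, Ideal.mem_span_singleton] at h3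
  obtain ⟨c, hc⟩ := h3
  refine ⟨(Q /ₘ M₀).map (phiR m d) + c, ?_⟩
  have hdiv : Q %ₘ M₀ + M₀ * (Q /ₘ M₀) = Q := Polynomial.modByMonic_add_div Q M₀
  have hE : Polynomial.eval₂ (substHom m d) ((Wgen m d) ^ 2 * C (Htgen m d) + rtgen m d) P
      = (Polynomial.mapRingHom (phiR m d)) Q + M₀.map (phiR m d) * c := by
    rw [← hc]; simp only [Polynomial.coe_mapRingHom]; ring
  have hQsplit : (Polynomial.mapRingHom (phiR m d)) Q
      = (Q %ₘ M₀).map (phiR m d) + M₀.map (phiR m d) * (Q /ₘ M₀).map (phiR m d) := by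
    conv_lhs => rw [← hdiv]
    simp only [Polynomial.coe_mapRingHom, Polynomial.map_add, Polynomial.map_mul]
  rw [hE, hQsplit]
  ring

/-- Rewriting a mapped low-degree polynomial as the explicit coefficient sum. -/
lemma rem_sum (m d n : ℕ) (hn : 0 < n) (r : Polynomial (MvPolynomial (sigABC m d) ℂ))
    (hr : r.degree < (n : WithBot ℕ)) :
    r.map (phiR m d)
      = ∑ i : Fin n, C (phiR m d (r.coeff (n - 1 - (i : ℕ)))) * X ^ (n - 1 - (i : ℕ)) := by
  have hnat : (r.map (phiR m d)).natDegree < n := by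
    rcases eq_or_ne r 0 with h | h
    · simp [h, hn]
    · have hdeg : (r.map (phiR m d)).degree < (n : WithBot ℕ) :=
        lt_of_le_of_lt Polynomial.degree_map_le hr
      rcases eq_or_ne (r.map (phiR m d)) 0 with h0 | h0
      · simp [h0, hn]
      · exact (Polynomial.natDegree_lt_iff_degree_lt h0).mpr hdeg
  rw [Polynomial.as_sum_range' _ n hnat]
  rw [Fin.sum_univ_eq_sum_range (fun i => C (phiR m d (r.coeff (n - 1 - i))) * X ^ (n - 1 - i)) n]
  rw [Finset.sum_range_reflect (fun i => C (phiR m d (r.coeff i)) * X ^ i) n]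
  refine Finset.sum_congr rfl fun k _ => ?_
  rw [Polynomial.C_mul_X_pow_eq_monomial, Polynomial.coeff_map]

theorem stmt_14 (m d : ℕ) (hd : 0 < d)
    (P : Polynomial (MvPolynomial (Fin m) ℂ)) :
    ∃ (Wt Wb : Polynomial (MvPolynomial (sigAll m d) ℂ))
      (T : Fin (2 * d) → MvPolynomial (sigAll m d) ℂ)
      (T' : Fin d → MvPolynomial (sigAll m d) ℂ),
      -- T₁,…,T_{3d} depend only on the variables a_i, b_{j,i}, c_i
      (∀ i, T i ∈ Set.range
        (MvPolynomial.rename (Sum.inl : sigABC m d → sigAll m d))) ∧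
      (∀ i, T' i ∈ Set.range
        (MvPolynomial.rename (Sum.inl : sigABC m d → sigAll m d))) ∧
      -- P_L(W²H₁+r₁,…,W²H_m+r_m, W²H̃+r̃) = W̃·W² + Σ T_{i+1} x_n^{2d-1-i}
      Polynomial.eval₂ (substHom m d) ((Wgen m d) ^ 2 * C (Htgen m d) + rtgen m d) P =
        Wt * (Wgen m d) ^ 2 +
          ∑ i : Fin (2 * d), C (T i) * X ^ (2 * d - 1 - (i : ℕ)) ∧
      -- (∂P_L/∂z)(…) = W̄·W + Σ T_{2d+1+i} x_n^{d-1-i}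
      Polynomial.eval₂ (substHom m d) ((Wgen m d) ^ 2 * C (Htgen m d) + rtgen m d)
          (Polynomial.derivative P) =
        Wb * (Wgen m d) +
          ∑ i : Fin d, C (T' i) * X ^ (d - 1 - (i : ℕ)) := by
  have hM : (W0 m d).Monic := monic_W0 m d hd
  have hM2 : ((W0 m d) ^ 2).Monic := hM.pow 2
  have hmapW2 : ((W0 m d) ^ 2).map (phiR m d) = (Wgen m d) ^ 2 := by
    rw [Polynomial.map_pow, map_W0]
  obtain ⟨Wt, hWt⟩ := key_s14 m d ((W0 m d) ^ 2) hM2 (hmapW2 ▸ dvd_refl _) P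
  obtain ⟨Wb, hWb⟩ := key_s14 m d (W0 m d) hM
    (by rw [map_W0]; exact dvd_pow_self _ two_ne_zero) (Polynomial.derivative P)
  set Q := Polynomial.eval₂ (f0 m d) (rt0 m d) P with hQdef
  set Q' := Polynomial.eval₂ (f0 m d) (rt0 m d) (Polynomial.derivative P) with hQ'def
  refine ⟨Wt, Wb,
    fun i => phiR m d ((Q %ₘ (W0 m d) ^ 2).coeff (2 * d - 1 - (i : ℕ))),
    fun i => phiR m d ((Q' %ₘ W0 m d).coeff (d - 1 - (i : ℕ))), ?_, ?_, ?_, ?_⟩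
  · exact fun i => ⟨_, rfl⟩
  · exact fun i => ⟨_, rfl⟩
  · rw [hWt, hmapW2]
    congr 1
    have hdeg : (Q %ₘ (W0 m d) ^ 2).degree < ((2 * d : ℕ) : WithBot ℕ) := by
      have := Polynomial.degree_modByMonic_lt Q hM2
      rwa [Polynomial.degree_pow, degree_W0 m d hd, show (2 : ℕ) • (d : WithBot ℕ)
        = ((2 * d : ℕ) : WithBot ℕ) by push_cast; rw [nsmul_eq_mul]; push_cast; ring] at this
    exact rem_sum m d (2 * d) (by omega) _ hdeg
  · rw [hWb, map_W0]
    congr 1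
    have hdeg : (Q' %ₘ W0 m d).degree < ((d : ℕ) : WithBot ℕ) := by
      have := Polynomial.degree_modByMonic_lt Q' hM
      rwa [degree_W0 m d hd] at this
    exact rem_sum m d d hd _ hdeg
end
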